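/- arXiv:1808.05923 — 2 statements merged into one kernel-verified Lean document; each statement's English description precedes it below -/
import Mathlib

section
/- Let n ≥ 1, n1 ≥ 2, r ≥ 0, m1, m2 ≥ 0 with m = m1+m2 ≥ 1, let d1 ∈ U(n1; 2^{m1} 3^{m2}), let d2 be a column-balanced n1×r matrix with entries in {1,2}, let D3 be the column augmented design and D3b the design D3 with the appended blocking column. (i) If d0 ∈ U(n; 2^{m1} 3^{m2}), then WD(D3) = LBW3 if and only if WD(D3b) = C(r+1) + (n²/(n+n1)²)·(3/2)^{r+1}·WD(d0) + (1/(n+n1)²)·(5/4)^{m1}·(23/18)^{m2+r}·((3/2)·T1 + 2·(5/4)·T2). (ii) If m2 = 0 and d0 ∈ U(n; 2^m), then WD(D3) = LBW3_2 if and only if WD(D3b) = C(r+1) + (n²/(n+n1)²)·(3/2)^{r+1}·WD(d0) + (1/(n+n1)²)·(5/4)^m·(23/18)^r·((3/2)·T1' + 2·(5/4)·(p1·(6/5)^{w1} + q1·(6/5)^{w1+1})). (iii) If m1 = 0 and d0 ∈ U(n; 3^m), then WD(D3) = LBW3_3 if and only if WD(D3b) = C(r+1) + (n²/(n+n1)²)·(3/2)^{r+1}·WD(d0)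 + (1/(n+n1)²)·(23/18)^{m+r}·((3/2)·(p2·(27/23)^{w2} + q2·(27/23)^{w2+1}) + 2·(5/4)·(p3·(27/23)^{w3} + q3·(27/23)^{w3+1})). -/
open Finset

noncomputable section

namespace CAUD

/-- The mapped point value `u = (2x+1)/(2q)`. -/
def uVal (q x : ℕ) : ℝ := (2 * (x : ℝ) + 1) / (2 * (q : ℝ))

/-- The squared wrap-around L2-discrepancy of an `N × M` design whose `k`-th
column takes values in `{0, …, q k - 1}`. -/
def WD {N M : ℕ} (q : Fin M → ℕ) (x : Fin N → Fin M → ℕ) : ℝ :=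
  -((4 : ℝ) / 3) ^ M + (1 / (N : ℝ) ^ 2) *
    ∑ i : Fin N, ∑ j : Fin N, ∏ k : Fin M,
      ((3 : ℝ) / 2 - |uVal (q k) (x i k) - uVal (q k) (x j k)| *
        (1 - |uVal (q k) (x i k) - uVal (q k) (x j k)|))

/-- A mixed-level U-type design in `U(N; 2^{m1} 3^{m2})`: the first `m1` columns are
two-level and balanced, the last `m2` columns are three-level and balanced. -/
def IsUType (N m1 m2 : ℕ) (d : Fin N → Fin (m1 + m2) → ℕ) : Prop :=
  ∀ k : Fin (m1 + m2),
    if (k : ℕ) < m1 then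
      (∀ i, d i k < 2) ∧ ∀ v < 2, 2 * (univ.filter (fun i => d i k = v)).card = N
    else
      (∀ i, d i k < 3) ∧ ∀ v < 3, 3 * (univ.filter (fun i => d i k = v)).card = N

/-- A column-balanced `n1 × r` matrix with entries in `{1, 2}`: every column has
exactly `n1/2` entries equal to 1 and `n1/2` entries equal to 2. -/
def IsBalanced (n1 r : ℕ) (d2 : Fin n1 → Fin r → ℕ) : Prop :=
  (∀ i k, d2 i k = 1 ∨ d2 i k = 2) ∧
  ∀ k, 2 * (univ.filter (fun i => d2 i k = 1)).card = n1 ∧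
       2 * (univ.filter (fun i => d2 i k = 2)).card = n1

/-- The column augmented design: first `n` rows are `(d0, 0)`, last `n1` rows `(d1, d2)`. -/
def augDesign (n n1 m r : ℕ) (d0 : Fin n → Fin m → ℕ) (d1 : Fin n1 → Fin m → ℕ)
    (d2 : Fin n1 → Fin r → ℕ) : Fin (n + n1) → Fin (m + r) → ℕ := fun i k =>
  if hi : (i : ℕ) < n then
    if hk : (k : ℕ) < m then d0 ⟨i, hi⟩ ⟨k, hk⟩ else 0
  else
    if hk : (k : ℕ) < m then d1 ⟨(i : ℕ) - n, by have := i.isLt; omega⟩ ⟨k, hk⟩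
    else d2 ⟨(i : ℕ) - n, by have := i.isLt; omega⟩ ⟨(k : ℕ) - m, by have := k.isLt; omega⟩

/-- Append one blocking column: 0 on the initial rows, 1 on the follow-up rows. -/
def appendOne (n n1 M : ℕ) (D : Fin (n + n1) → Fin M → ℕ) :
    Fin (n + n1) → Fin (M + 1) → ℕ := fun i k =>
  if hk : (k : ℕ) < M then D i ⟨k, hk⟩ else if (i : ℕ) < n then 0 else 1

/-- Append two blocking columns: the first is 0 on the initial rows and 1 on the
follow-up rows; the second is 0 on the initial rows and the first `n1/2` follow-up
rows, and 1 on the remaining follow-up rows. -/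
def appendTwo (n n1 M : ℕ) (D : Fin (n + n1) → Fin M → ℕ) :
    Fin (n + n1) → Fin (M + 2) → ℕ := fun i k =>
  if hk : (k : ℕ) < M then D i ⟨k, hk⟩
  else if (k : ℕ) = M then (if (i : ℕ) < n then 0 else 1)
  else (if (i : ℕ) < n + n1 / 2 then 0 else 1)

/-- Level sizes of the (possibly blocking-augmented) column augmented design:
first `m1` columns are two-level, the next `m2 + r` are three-level, anything
after that (blocking columns) is two-level. -/
def qfun (m1 m2 r k : ℕ) : ℕ :=
  if k < m1 then 2 else if k < m1 + m2 + r then 3 else 2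

/-- Coincidence number among the first `m1` columns. -/
def Fco {N M : ℕ} (m1 : ℕ) (D : Fin N → Fin M → ℕ) (i j : Fin N) : ℕ :=
  (univ.filter (fun k : Fin M => (k : ℕ) < m1 ∧ D i k = D j k)).card

/-- Coincidence number among columns `m1, …, m1 + m2 - 1`. -/
def Vco {N M : ℕ} (m1 m2 : ℕ) (D : Fin N → Fin M → ℕ) (i j : Fin N) : ℕ :=
  (univ.filter (fun k : Fin M => m1 ≤ (k : ℕ) ∧ (k : ℕ) < m1 + m2 ∧ D i k = D j k)).card

/-- Coincidence number among the columns `≥ m`, counting agreements with common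
value in `{1, 2}`. -/
def Tco {N M : ℕ} (m : ℕ) (D : Fin N → Fin M → ℕ) (i j : Fin N) : ℕ :=
  (univ.filter (fun k : Fin M =>
    m ≤ (k : ℕ) ∧ D i k = D j k ∧ (D i k = 1 ∨ D i k = 2))).card

/-- Total coincidence number between two rows. -/
def lam {N M : ℕ} (D : Fin N → Fin M → ℕ) (i j : Fin N) : ℕ :=
  (univ.filter (fun k : Fin M => D i k = D j k)).card

/-- Number of rows whose `k`-th entry is `u` and whose `l`-th entry is `v`. -/
def nuv {N M : ℕ} (d : Fin N → Fin M → ℕ) (k l : Fin M) (u v : ℕ) : ℕ :=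
  (univ.filter (fun i : Fin N => d i k = u ∧ d i l = v)).card

/-- Non-orthogonality of a pair of columns. -/
def fNOD {N M : ℕ} (q : Fin M → ℕ) (d : Fin N → Fin M → ℕ) (k l : Fin M) : ℝ :=
  ∑ u ∈ Finset.range (q k), ∑ v ∈ Finset.range (q l),
    ((nuv d k l u v : ℝ) - (N : ℝ) / ((q k : ℝ) * (q l : ℝ))) ^ 2

/-- The `E(f_NOD)` criterion: average non-orthogonality over all pairs of columns. -/
def EfNOD {N M : ℕ} (q : Fin M → ℕ) (d : Fin N → Fin M → ℕ) : ℝ :=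
  (∑ k : Fin M, ∑ l : Fin M, if (k : ℕ) < (l : ℕ) then fNOD q d k l else 0) /
    (Nat.choose M 2 : ℝ)

/-- Stacking the stage designs `d 0, …, d (l-1)` on top of one another. -/
def stack (M : ℕ) (ns : ℕ → ℕ) (d : (j : ℕ) → Fin (ns j) → Fin M → ℕ) :
    (l : ℕ) → Fin (∑ j ∈ Finset.range l, ns j) → Fin M → ℕ
  | 0 => fun _ _ => 0
  | l + 1 => fun i =>
    let i' : Fin ((∑ j ∈ Finset.range l, ns j) + ns l) :=
      Fin.cast (Finset.sum_range_succ ns l) i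
    if h : (i' : ℕ) < ∑ j ∈ Finset.range l, ns j then
      stack M ns d l ⟨(i' : ℕ), h⟩
    else d l ⟨(i' : ℕ) - ∑ j ∈ Finset.range l, ns j, by have := i'.isLt; omega⟩

def aa : ℝ := Real.log (6 / 5)

def bb : ℝ := Real.log (27 / 23)

/-- The constant `C(s)`. -/
def Cconst (n n1 m s : ℕ) : ℝ :=
  -(((4 : ℝ) / 3) ^ s - ((n : ℝ) ^ 2 / ((n : ℝ) + n1) ^ 2) * ((3 : ℝ) / 2) ^ s) * ((4 : ℝ) / 3) ^ m
  + ((n1 : ℝ) / ((n : ℝ) + n1) ^ 2) * ((3 : ℝ) / 2) ^ (m + s)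

def phi1 (n1 m1 m2 r : ℕ) : ℝ :=
  aa * m1 * ((n1 : ℝ) - 2) / (2 * ((n1 : ℝ) - 1)) + bb * m2 * ((n1 : ℝ) - 3) / (3 * ((n1 : ℝ) - 1))
  + bb * r * ((n1 : ℝ) - 2) / (2 * ((n1 : ℝ) - 1))

def phi2 (m1 m2 : ℕ) : ℝ := aa * m1 / 2 + bb * m2 / 3

def T1c (n1 m1 m2 r : ℕ) : ℝ := (n1 : ℝ) * ((n1 : ℝ) - 1) * Real.exp (phi1 n1 m1 m2 r)

def T2c (n n1 m1 m2 : ℕ) : ℝ := (n : ℝ) * (n1 : ℝ) * Real.exp (phi2 m1 m2)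

/-- Lower bound `LBW3` (mixed-level case, Theorem 1). -/
def LBW3 (n n1 m1 m2 r : ℕ) (wd0 : ℝ) : ℝ :=
  Cconst n n1 (m1 + m2) r + ((n : ℝ) ^ 2 / ((n : ℝ) + n1) ^ 2) * ((3 : ℝ) / 2) ^ r * wd0
  + (1 / ((n : ℝ) + n1) ^ 2) * ((5 : ℝ) / 4) ^ m1 * ((23 : ℝ) / 18) ^ (m2 + r) *
      (T1c n1 m1 m2 r + 2 * T2c n n1 m1 m2)

def phi1p (n1 m r : ℕ) : ℝ :=
  aa * m * ((n1 : ℝ) - 2) / (2 * ((n1 : ℝ) - 1)) + bb * r * ((n1 : ℝ) - 2) / (2 * ((n1 : ℝ) - 1))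

def T1pc (n1 m r : ℕ) : ℝ := (n1 : ℝ) * ((n1 : ℝ) - 1) * Real.exp (phi1p n1 m r)

def w1 (m : ℕ) : ℕ := m / 2

def q1c (n n1 m : ℕ) : ℝ := (m : ℝ) * n * n1 / 2 - (n : ℝ) * n1 * (w1 m : ℝ)

def p1c (n n1 m : ℕ) : ℝ := (n : ℝ) * n1 - q1c n n1 m

/-- Lower bound `LBW3` for a two-level initial design (Theorem 2). -/
def LBW32 (n n1 m r : ℕ) (wd0 : ℝ) : ℝ :=
  Cconst n n1 m r + ((n : ℝ) ^ 2 / ((n : ℝ) + n1) ^ 2) * ((3 : ℝ) / 2) ^ r * wd0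
  + (1 / ((n : ℝ) + n1) ^ 2) * ((5 : ℝ) / 4) ^ m * ((23 : ℝ) / 18) ^ r *
      (T1pc n1 m r + 2 * (p1c n n1 m * ((6 : ℝ) / 5) ^ w1 m + q1c n n1 m * ((6 : ℝ) / 5) ^ (w1 m + 1)))

def w2 (n1 m r : ℕ) : ℤ :=
  ⌊(m : ℝ) * ((n1 : ℝ) - 3) / (3 * ((n1 : ℝ) - 1)) + (r : ℝ) * ((n1 : ℝ) - 2) / (2 * ((n1 : ℝ) - 1))⌋

def q2c (n1 m r : ℕ) : ℝ :=
  (m : ℝ) * n1 * ((n1 : ℝ) - 3) / 3 + (r : ℝ) * n1 * ((n1 : ℝ) - 2) / 2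
  - (n1 : ℝ) * ((n1 : ℝ) - 1) * (w2 n1 m r : ℝ)

def p2c (n1 m r : ℕ) : ℝ := (n1 : ℝ) * ((n1 : ℝ) - 1) - q2c n1 m r

def w3 (m : ℕ) : ℕ := m / 3

def q3c (n n1 m : ℕ) : ℝ := (m : ℝ) * n * n1 / 3 - (n : ℝ) * n1 * (w3 m : ℝ)

def p3c (n n1 m : ℕ) : ℝ := (n : ℝ) * n1 - q3c n n1 m

/-- Lower bound `LBW3` for a three-level initial design (Theorem 3). -/
def LBW33 (n n1 m r : ℕ) (wd0 : ℝ) : ℝ :=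
  Cconst n n1 m r + ((n : ℝ) ^ 2 / ((n : ℝ) + n1) ^ 2) * ((3 : ℝ) / 2) ^ r * wd0
  + (1 / ((n : ℝ) + n1) ^ 2) * ((23 : ℝ) / 18) ^ (m + r) *
      (p2c n1 m r * ((27 : ℝ) / 23) ^ w2 n1 m r + q2c n1 m r * ((27 : ℝ) / 23) ^ (w2 n1 m r + 1)
       + 2 * (p3c n n1 m * ((27 : ℝ) / 23) ^ w3 m + q3c n n1 m * ((27 : ℝ) / 23) ^ (w3 m + 1)))

/-- Lower bound of Theorem 4 for a mixed-level initial design. -/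
def LBW3b1 (n n1 m1 m2 r : ℕ) (wd0 : ℝ) : ℝ :=
  Cconst n n1 (m1 + m2) (r + 1) + ((n : ℝ) ^ 2 / ((n : ℝ) + n1) ^ 2) * ((3 : ℝ) / 2) ^ (r + 1) * wd0
  + (1 / ((n : ℝ) + n1) ^ 2) * ((5 : ℝ) / 4) ^ m1 * ((23 : ℝ) / 18) ^ (m2 + r) *
      ((3 : ℝ) / 2 * T1c n1 m1 m2 r + 2 * ((5 : ℝ) / 4) * T2c n n1 m1 m2)

/-- Lower bound of Theorem 4 for a two-level initial design. -/
def LBW3b2 (n n1 m r : ℕ) (wd0 : ℝ) : ℝ :=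
  Cconst n n1 m (r + 1) + ((n : ℝ) ^ 2 / ((n : ℝ) + n1) ^ 2) * ((3 : ℝ) / 2) ^ (r + 1) * wd0
  + (1 / ((n : ℝ) + n1) ^ 2) * ((5 : ℝ) / 4) ^ m * ((23 : ℝ) / 18) ^ r *
      ((3 : ℝ) / 2 * T1pc n1 m r +
        2 * ((5 : ℝ) / 4) * (p1c n n1 m * ((6 : ℝ) / 5) ^ w1 m + q1c n n1 m * ((6 : ℝ) / 5) ^ (w1 m + 1)))

/-- Lower bound of Theorem 4 for a three-level initial design. -/
def LBW3b3 (n n1 m r : ℕ) (wd0 : ℝ) : ℝ :=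
  Cconst n n1 m (r + 1) + ((n : ℝ) ^ 2 / ((n : ℝ) + n1) ^ 2) * ((3 : ℝ) / 2) ^ (r + 1) * wd0
  + (1 / ((n : ℝ) + n1) ^ 2) * ((23 : ℝ) / 18) ^ (m + r) *
      ((3 : ℝ) / 2 * (p2c n1 m r * ((27 : ℝ) / 23) ^ w2 n1 m r
                      + q2c n1 m r * ((27 : ℝ) / 23) ^ (w2 n1 m r + 1))
       + 2 * ((5 : ℝ) / 4) * (p3c n n1 m * ((27 : ℝ) / 23) ^ w3 m
                              + q3c n n1 m * ((27 : ℝ) / 23) ^ (w3 m + 1)))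

def phi1B (n1 m1 m2 r : ℕ) : ℝ :=
  aa * ((m1 : ℝ) + 1) * ((n1 : ℝ) - 2) / (2 * ((n1 : ℝ) - 1))
  + bb * m2 * ((n1 : ℝ) - 3) / (3 * ((n1 : ℝ) - 1))
  + bb * r * ((n1 : ℝ) - 2) / (2 * ((n1 : ℝ) - 1))

def phi2B (m1 m2 : ℕ) : ℝ := aa * ((m1 : ℝ) + 1) / 2 + bb * m2 / 3

def T1Bc (n1 m1 m2 r : ℕ) : ℝ := (n1 : ℝ) * ((n1 : ℝ) - 1) * Real.exp (phi1B n1 m1 m2 r)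

def T2Bc (n n1 m1 m2 : ℕ) : ℝ := (n : ℝ) * (n1 : ℝ) * Real.exp (phi2B m1 m2)

/-- Lower bound `LBW3B` (Theorem 5). -/
def LBW3B (n n1 m1 m2 r : ℕ) (wd0 : ℝ) : ℝ :=
  Cconst n n1 (m1 + m2) (r + 2) + ((n : ℝ) ^ 2 / ((n : ℝ) + n1) ^ 2) * ((3 : ℝ) / 2) ^ (r + 2) * wd0
  + (1 / ((n : ℝ) + n1) ^ 2) * ((5 : ℝ) / 4) ^ (m1 + 1) * ((23 : ℝ) / 18) ^ (m2 + r) *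
      ((3 : ℝ) / 2 * T1Bc n1 m1 m2 r + 2 * ((5 : ℝ) / 4) * T2Bc n n1 m1 m2)

def psi1 (n1 m1 m2 r : ℕ) : ℤ :=
  ⌊((m1 : ℝ) * ((n1 : ℝ) - 2) / 2 + (m2 : ℝ) * ((n1 : ℝ) - 3) / 3 + (r : ℝ) * ((n1 : ℝ) - 2) / 2) /
      ((n1 : ℝ) - 1)⌋

def eta1 (n1 m1 m2 r : ℕ) : ℝ :=
  (m1 : ℝ) * n1 * ((n1 : ℝ) - 2) / 2 + (m2 : ℝ) * n1 * ((n1 : ℝ) - 3) / 3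
  + (r : ℝ) * n1 * ((n1 : ℝ) - 2) / 2 - (n1 : ℝ) * ((n1 : ℝ) - 1) * (psi1 n1 m1 m2 r : ℝ)

def zeta1 (n1 m1 m2 r : ℕ) : ℝ := (n1 : ℝ) * ((n1 : ℝ) - 1) - eta1 n1 m1 m2 r

def psi2 (m1 m2 : ℕ) : ℤ := ⌊(m1 : ℝ) / 2 + (m2 : ℝ) / 3⌋

def eta2 (n n1 m1 m2 : ℕ) : ℝ :=
  (m1 : ℝ) * n * n1 / 2 + (m2 : ℝ) * n * n1 / 3 - (n : ℝ) * n1 * (psi2 m1 m2 : ℝ)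

def zeta2 (n n1 m1 m2 : ℕ) : ℝ := (n : ℝ) * n1 - eta2 n n1 m1 m2

def Q1c (n1 m1 m2 r : ℕ) : ℝ :=
  zeta1 n1 m1 m2 r * (psi1 n1 m1 m2 r : ℝ) ^ 2 + eta1 n1 m1 m2 r * ((psi1 n1 m1 m2 r : ℝ) + 1) ^ 2

def Q1pc (n1 m1 m2 r : ℕ) : ℝ :=
  zeta1 n1 m1 m2 r * ((psi1 n1 m1 m2 r : ℝ) + 1) ^ 2 + eta1 n1 m1 m2 r * ((psi1 n1 m1 m2 r : ℝ) + 2) ^ 2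

def Q2c (n n1 m1 m2 : ℕ) : ℝ :=
  zeta2 n n1 m1 m2 * (psi2 m1 m2 : ℝ) ^ 2 + eta2 n n1 m1 m2 * ((psi2 m1 m2 : ℝ) + 1) ^ 2

/-- Lower bound `LBf3` for `E(f_NOD)` of the column augmented design. -/
def LBf3 (n n1 m1 m2 r : ℕ) (ef0 : ℝ) : ℝ :=
  ((m1 : ℝ) + m2) * ((m1 : ℝ) + m2 - 1) / (((m1 : ℝ) + m2 + r) * ((m1 : ℝ) + m2 + r - 1)) * ef0
  + 1 / (((m1 : ℝ) + m2 + r) * ((m1 : ℝ) + m2 + r - 1)) * (Q1c n1 m1 m2 r + 2 * Q2c n n1 m1 m2)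
  + ((n : ℝ) + n1) * ((m1 : ℝ) + m2 + r) / ((m1 : ℝ) + m2 + r - 1)
  - 1 / (((m1 : ℝ) + m2 + r) * ((m1 : ℝ) + m2 + r - 1)) *
    ((n : ℝ) * ((m1 : ℝ) + m2) ^ 2
      - (n : ℝ) ^ 2 * (((m1 : ℝ) + (m1 : ℝ) ^ 2) / 4 + (2 * (m2 : ℝ) + (m2 : ℝ) ^ 2) / 9
          + (m1 : ℝ) * m2 / 3)
      - (r : ℝ) * m1 * n * ((n : ℝ) - 2)
      - 2 * (r : ℝ) * m2 * n * ((n : ℝ) - 3) / 3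
      - (n : ℝ) * ((n : ℝ) - 1) * (r : ℝ) ^ 2
      + (r : ℝ) * ((n : ℝ) ^ 2 + (n1 : ℝ) ^ 2 / 2)
      + ((m1 : ℝ) / 2 + (m2 : ℝ) / 3 + (m1 : ℝ) * ((m1 : ℝ) - 1) / 4
          + ((m2 : ℝ) + r) * ((m2 : ℝ) + r - 1) / 9 + (m1 : ℝ) * ((m2 : ℝ) + r) / 3)
        * ((n : ℝ) + n1) ^ 2)

/-- Lower bound `LBf3b` for `E(f_NOD)` of the design with one added blocking column. -/
def LBf3b (n n1 m1 m2 r : ℕ) (ef0 : ℝ) : ℝ :=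
  ((m1 : ℝ) + m2) * ((m1 : ℝ) + m2 - 1) / (((m1 : ℝ) + m2 + r + 1) * ((m1 : ℝ) + m2 + r)) * ef0
  + 1 / (((m1 : ℝ) + m2 + r + 1) * ((m1 : ℝ) + m2 + r)) * (Q1pc n1 m1 m2 r + 2 * Q2c n n1 m1 m2)
  + ((n : ℝ) + n1) * ((m1 : ℝ) + m2 + r + 1) / ((m1 : ℝ) + m2 + r)
  - 1 / (((m1 : ℝ) + m2 + r + 1) * ((m1 : ℝ) + m2 + r)) *
    ((n : ℝ) * ((m1 : ℝ) + m2) ^ 2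
      - (n : ℝ) ^ 2 * (((m1 : ℝ) + (m1 : ℝ) ^ 2) / 4 + (2 * (m2 : ℝ) + (m2 : ℝ) ^ 2) / 9
          + (m1 : ℝ) * m2 / 3)
      - ((r : ℝ) + 1) * m1 * n * ((n : ℝ) - 2)
      - 2 * ((r : ℝ) + 1) * m2 * n * ((n : ℝ) - 3) / 3
      - (n : ℝ) * ((n : ℝ) - 1) * ((r : ℝ) + 1) ^ 2
      + (r : ℝ) * ((n : ℝ) ^ 2 + (n1 : ℝ) ^ 2 / 2) + (n : ℝ) ^ 2 + (n1 : ℝ) ^ 2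
      + ((m1 : ℝ) / 2 + (m2 : ℝ) / 3 + (m1 : ℝ) * ((m1 : ℝ) + 1) / 4
          + ((m2 : ℝ) + r) * ((m2 : ℝ) + r - 1) / 9 + ((m1 : ℝ) + 1) * ((m2 : ℝ) + r) / 3)
        * ((n : ℝ) + n1) ^ 2)

/-- Lower bound `LBf3B` for `E(f_NOD)` of the design with two added blocking columns. -/
def LBf3B (n n1 m1 m2 r : ℕ) (ef0 : ℝ) : ℝ :=
  ((m1 : ℝ) + m2) * ((m1 : ℝ) + m2 - 1) / (((m1 : ℝ) + m2 + r + 2) * ((m1 : ℝ) + m2 + r + 1)) * ef0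
  + 1 / (((m1 : ℝ) + m2 + r + 2) * ((m1 : ℝ) + m2 + r + 1)) *
      (Q1pc n1 (m1 + 1) m2 r + 2 * Q2c n n1 (m1 + 1) m2)
  + ((n : ℝ) + n1) * ((m1 : ℝ) + m2 + r + 2) / ((m1 : ℝ) + m2 + r + 1)
  - 1 / (((m1 : ℝ) + m2 + r + 2) * ((m1 : ℝ) + m2 + r + 1)) *
    ((n : ℝ) * ((m1 : ℝ) + m2) ^ 2
      - (n : ℝ) ^ 2 * (((m1 : ℝ) + (m1 : ℝ) ^ 2) / 4 + (2 * (m2 : ℝ) + (m2 : ℝ) ^ 2) / 9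
          + (m1 : ℝ) * m2 / 3)
      - ((r : ℝ) + 2) * m1 * n * ((n : ℝ) - 2)
      - 2 * ((r : ℝ) + 2) * m2 * n * ((n : ℝ) - 3) / 3
      - (n : ℝ) * ((n : ℝ) - 1) * ((r : ℝ) + 2) ^ 2
      + ((r : ℝ) + 2) * (n : ℝ) ^ 2 + (3 + (r : ℝ)) * (n1 : ℝ) ^ 2 / 2 + (n : ℝ) * n1
      + ((m1 : ℝ) / 2 + (m2 : ℝ) / 3 + ((m1 : ℝ) + 2) * ((m1 : ℝ) + 1) / 4
          + ((m2 : ℝ) + r) * ((m2 : ℝ) + r - 1) / 9 + ((m1 : ℝ) + 2) * ((m2 : ℝ) + r) / 3)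
        * ((n : ℝ) + n1) ^ 2)



-- chord bound for powers
lemma pow_chord (t : ℝ) (ht : 1 < t) (w k : ℕ) :
    t ^ w * (1 + ((k:ℝ) - w) * (t - 1)) ≤ t ^ k := by
  have ht0 : (0:ℝ) < t := by linarith
  rcases le_or_gt w k with h | h
  · obtain ⟨d, rfl⟩ := Nat.exists_eq_add_of_le h
    have hb : 1 + (d:ℝ) * (t - 1) ≤ (1 + (t-1)) ^ d := one_add_mul_le_pow (by linarith) d
    rw [show (1:ℝ) + (t-1) = t by ring] at hb
    have hcast : 1 + (((w + d : ℕ):ℝ) - (w:ℝ)) * (t - 1) = 1 + (d:ℝ) * (t - 1) := by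
      push_cast; ring
    rw [hcast, pow_add]
    exact mul_le_mul_of_nonneg_left hb (by positivity)
  · obtain ⟨e, rfl⟩ : ∃ e, w = k + e := ⟨w - k, by omega⟩
    have ht0' : (0:ℝ) < t⁻¹ := by positivity
    have hb : 1 + (e:ℝ) * (t⁻¹ - 1) ≤ (1 + (t⁻¹ - 1)) ^ e :=
      one_add_mul_le_pow (by nlinarith) e
    have h1 : (1 + (t⁻¹ - 1)) ^ e = (t ^ e)⁻¹ := by
      rw [show 1 + (t⁻¹ - 1) = t⁻¹ by ring, inv_pow]
    have htinv : -(t - 1) ≤ t⁻¹ - 1 := by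
      have h2 : t * t⁻¹ = 1 := mul_inv_cancel₀ (ne_of_gt ht0)
      nlinarith
    have he0 : (0:ℝ) ≤ (e:ℝ) := by positivity
    have key : 1 + ((k:ℝ) - ((k + e : ℕ):ℝ)) * (t - 1) ≤ (t ^ e)⁻¹ := by
      rw [← h1]
      refine le_trans ?_ hb
      have : 1 + ((k:ℝ) - ((k + e : ℕ):ℝ)) * (t - 1) = 1 + (e:ℝ) * (-(t - 1)) := by
        push_cast; ring
      rw [this]
      nlinarith
    calc t ^ (k + e) * (1 + ((k:ℝ) - ((k+e:ℕ):ℝ)) * (t - 1)) ≤ t ^ (k+e) * (t ^ e)⁻¹ :=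
          mul_le_mul_of_nonneg_left key (by positivity)
      _ = t ^ k := by rw [pow_add]; field_simp

lemma sum_chord {α : Type*} (s : Finset α) (f : α → ℕ) (t : ℝ) (ht : 1 < t) (w : ℕ) :
    (s.card : ℝ) * t ^ w + ((∑ p ∈ s, (f p : ℝ)) - s.card * w) * (t ^ w * (t - 1))
      ≤ ∑ p ∈ s, t ^ f p := by
  have h1 : ∀ p ∈ s, t ^ w * (1 + ((f p : ℝ) - w) * (t - 1)) ≤ t ^ f p :=
    fun p _ => pow_chord t ht w (f p)
  calc (s.card : ℝ) * t ^ w + ((∑ p ∈ s, (f p : ℝ)) - s.card * w) * (t ^ w * (t - 1))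
      = ∑ p ∈ s, t ^ w * (1 + ((f p : ℝ) - w) * (t - 1)) := by
        rw [Finset.sum_congr rfl (fun p _ => by ring :
          ∀ p ∈ s, t ^ w * (1 + ((f p:ℝ) - w) * (t - 1)) =
            t ^ w + ((f p : ℝ) * (t ^ w * (t-1)) - (w:ℝ) * (t ^ w * (t-1))))]
        rw [Finset.sum_add_distrib, Finset.sum_const, Finset.sum_sub_distrib,
          ← Finset.sum_mul, Finset.sum_const]
        push_cast; ring
    _ ≤ _ := Finset.sum_le_sum h1

lemma sum_exp_chord {α : Type*} (s : Finset α) (f : α → ℝ) (c : ℝ)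
    (hc : ∑ p ∈ s, f p = s.card * c) :
    (s.card : ℝ) * Real.exp c ≤ ∑ p ∈ s, Real.exp (f p) := by
  have h1 : ∀ p ∈ s, Real.exp c * (1 + (f p - c)) ≤ Real.exp (f p) := by
    intro p _
    have := Real.add_one_le_exp (f p - c)
    calc Real.exp c * (1 + (f p - c)) ≤ Real.exp c * Real.exp (f p - c) := by
          nlinarith [Real.exp_pos c]
      _ = Real.exp (f p) := by rw [← Real.exp_add]; ring_nf
  calc (s.card : ℝ) * Real.exp c
      = ∑ p ∈ s, Real.exp c * (1 + (f p - c)) := by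
        rw [Finset.sum_congr rfl (fun p _ => by ring :
          ∀ p ∈ s, Real.exp c * (1 + (f p - c)) = (Real.exp c - Real.exp c * c) + Real.exp c * f p)]
        rw [Finset.sum_add_distrib, Finset.sum_const, ← Finset.mul_sum, hc]
        ring
    _ ≤ _ := Finset.sum_le_sum h1


def ccf (m1 k : ℕ) : ℝ := if k < m1 then 5/4 else 23/18

def GpC {M : ℕ} (c : Fin M → ℝ) (u v : Fin M → ℕ) : ℝ :=
  ∏ k, (if u k = v k then (3:ℝ)/2 else c k)

def Fcnt (m1 : ℕ) {M : ℕ} (u v : Fin M → ℕ) : ℕ :=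
  ∑ k : Fin M, if (k : ℕ) < m1 ∧ u k = v k then 1 else 0

def Hcnt (m1 : ℕ) {M : ℕ} (u v : Fin M → ℕ) : ℕ :=
  ∑ k : Fin M, if m1 ≤ (k : ℕ) ∧ u k = v k then 1 else 0

def rowI (n m r : ℕ) (d0 : Fin n → Fin m → ℕ) (i : Fin n) : Fin (m + r) → ℕ := fun k =>
  if hk : (k : ℕ) < m then d0 i ⟨k, hk⟩ else 0

def rowF (n1 m r : ℕ) (d1 : Fin n1 → Fin m → ℕ) (d2 : Fin n1 → Fin r → ℕ) (j : Fin n1) :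
    Fin (m + r) → ℕ := fun k =>
  if hk : (k : ℕ) < m then d1 j ⟨k, hk⟩
  else d2 j ⟨(k : ℕ) - m, by have := k.isLt; omega⟩

lemma uK2 (x y : ℕ) (hx : x < 2) (hy : y < 2) :
    (3:ℝ)/2 - |uVal 2 x - uVal 2 y| * (1 - |uVal 2 x - uVal 2 y|)
    = if x = y then 3/2 else 5/4 := by
  interval_cases x <;> interval_cases y <;> norm_num [uVal, abs_of_nonneg, abs_of_nonpos]

lemma uK3 (x y : ℕ) (hx : x < 3) (hy : y < 3) :
    (3:ℝ)/2 - |uVal 3 x - uVal 3 y| * (1 - |uVal 3 x - uVal 3 y|)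
    = if x = y then 3/2 else 23/18 := by
  interval_cases x <;> interval_cases y <;> norm_num [uVal, abs_of_nonneg, abs_of_nonpos]

lemma WD_eq {N M : ℕ} (q : Fin M → ℕ) (x : Fin N → Fin M → ℕ)
    (hq : ∀ k, q k = 2 ∨ q k = 3) (hx : ∀ i k, x i k < q k) :
    WD q x = -((4:ℝ)/3) ^ M + (1 / (N:ℝ)^2) * ∑ i, ∑ j,
      GpC (fun k => if q k = 2 then (5/4:ℝ) else 23/18) (x i) (x j) := by
  unfold WD GpC
  congr 2
  refine Finset.sum_congr rfl fun i _ => Finset.sum_congr rfl fun j _ =>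
    Finset.prod_congr rfl fun k _ => ?_
  rcases hq k with h | h <;> rw [h]
  · have h2 := uK2 (x i k) (x j k) (h ▸ hx i k) (h ▸ hx j k)
    rw [h2]; simp [h]
  · have h3 := uK3 (x i k) (x j k) (h ▸ hx i k) (h ▸ hx j k)
    rw [h3]; simp [h]

lemma Gp_diag {M : ℕ} (c : Fin M → ℝ) (u : Fin M → ℕ) : GpC c u u = (3/2:ℝ) ^ M := by
  unfold GpC
  rw [Finset.prod_congr rfl fun k _ => if_pos rfl, Finset.prod_const, Finset.card_univ,
    Fintype.card_fin]

lemma Gp_symm {M : ℕ} (c : Fin M → ℝ) (u v : Fin M → ℕ) : GpC c u v = GpC c v u := by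
  unfold GpC
  exact Finset.prod_congr rfl fun k _ => if_congr eq_comm rfl rfl

lemma Gp_factor {M : ℕ} (m1 : ℕ) (hm1 : m1 ≤ M) (u v : Fin M → ℕ) :
    GpC (fun k => ccf m1 (k : ℕ)) u v
    = (5/4:ℝ) ^ m1 * (23/18:ℝ) ^ (M - m1) *
        ((6/5:ℝ) ^ Fcnt m1 u v * (27/23:ℝ) ^ Hcnt m1 u v) := by
  unfold GpC Fcnt Hcnt
  have hpt : ∀ k : Fin M, (if u k = v k then (3:ℝ)/2 else ccf m1 (k : ℕ))
      = ccf m1 (k : ℕ) * ((6/5:ℝ) ^ (if (k:ℕ) < m1 ∧ u k = v k then 1 else 0) *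
          (27/23:ℝ) ^ (if m1 ≤ (k:ℕ) ∧ u k = v k then 1 else 0)) := by
    intro k
    by_cases hk : (k:ℕ) < m1 <;> by_cases he : u k = v k <;>
      simp [ccf, hk, he, not_lt.mp, Nat.not_le.mpr] <;> norm_num
  have hbase : (∏ k : Fin M, ccf m1 (k : ℕ)) = (5/4:ℝ) ^ m1 * (23/18:ℝ) ^ (M - m1) := by
    have h0 : (∏ k : Fin M, ccf m1 (k : ℕ)) = ∏ k ∈ Finset.range M, ccf m1 k :=
      Fin.prod_univ_eq_prod_range _ _
    rw [h0, show M = m1 + (M - m1) by omega]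
    rw [Finset.prod_range_add]
    have h1 : ∀ k ∈ Finset.range m1, ccf m1 k = (5/4:ℝ) := fun k hk =>
      if_pos (Finset.mem_range.mp hk)
    have h2 : ∀ k ∈ Finset.range (M - m1), ccf m1 (m1 + k) = (23/18:ℝ) :=
      fun k _ => if_neg (by omega)
    rw [Finset.prod_congr rfl h1, Finset.prod_congr rfl h2,
      Finset.prod_const, Finset.prod_const, Finset.card_range, Finset.card_range,
      Nat.add_sub_cancel_left]
  rw [Finset.prod_congr rfl fun k _ => hpt k, Finset.prod_mul_distrib,
    Finset.prod_mul_distrib, Finset.prod_pow_eq_pow_sum, Finset.prod_pow_eq_pow_sum,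
    hbase]

lemma pow_FH_exp (F H : ℕ) :
    (6/5:ℝ) ^ F * (27/23:ℝ) ^ H = Real.exp (aa * F + bb * H) := by
  rw [Real.exp_add, mul_comm aa, mul_comm bb, Real.exp_nat_mul, Real.exp_nat_mul]
  unfold aa bb
  rw [Real.exp_log (by norm_num), Real.exp_log (by norm_num)]

lemma count_pairs {A B : Type*} [Fintype A] [Fintype B] (x : A → ℕ) (y : B → ℕ) (Q : ℕ)
    (hx : ∀ i, x i < Q) (hy : ∀ j, y j < Q) :
    ∑ i : A, ∑ j : B, (if x i = y j then (1:ℝ) else 0)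
    = ∑ v ∈ Finset.range Q, ((univ.filter fun i => x i = v).card : ℝ) *
        ((univ.filter fun j => y j = v).card : ℝ) := by
  have hpt : ∀ (i : A) (j : B), (if x i = y j then (1:ℝ) else 0)
      = ∑ v ∈ Finset.range Q, (if x i = v then (1:ℝ) else 0) * (if y j = v then 1 else 0) := by
    intro i j
    rw [Finset.sum_eq_single (x i)]
    · by_cases h : x i = y j <;> simp [h, eq_comm]
    · intro b _ hb
      rw [if_neg (fun h => hb h.symm), zero_mul]
    · intro h; exact absurd (Finset.mem_range.mpr (hx i)) h
  calc ∑ i : A, ∑ j : B, (if x i = y j then (1:ℝ) else 0)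
      = ∑ i : A, ∑ j : B, ∑ v ∈ Finset.range Q,
          (if x i = v then (1:ℝ) else 0) * (if y j = v then 1 else 0) :=
        Finset.sum_congr rfl fun i _ => Finset.sum_congr rfl fun j _ => hpt i j
    _ = ∑ i : A, ∑ v ∈ Finset.range Q, ∑ j : B,
          (if x i = v then (1:ℝ) else 0) * (if y j = v then 1 else 0) :=
        Finset.sum_congr rfl fun i _ => Finset.sum_comm
    _ = ∑ v ∈ Finset.range Q, ∑ i : A, ∑ j : B,
          (if x i = v then (1:ℝ) else 0) * (if y j = v then 1 else 0) :=
        Finset.sum_comm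
    _ = ∑ v ∈ Finset.range Q, (∑ i : A, (if x i = v then (1:ℝ) else 0)) *
          (∑ j : B, (if y j = v then (1:ℝ) else 0)) :=
        Finset.sum_congr rfl fun v _ => (Finset.sum_mul_sum _ _ _ _).symm
    _ = _ := by
        refine Finset.sum_congr rfl fun v _ => ?_
        rw [Finset.sum_boole, Finset.sum_boole]

def S1v (n1 m1 m2 r : ℕ) (d1 : Fin n1 → Fin (m1 + m2) → ℕ) (d2 : Fin n1 → Fin r → ℕ) : ℝ :=
  ∑ p ∈ (univ : Finset (Fin n1)).offDiag,
    (6/5:ℝ) ^ Fcnt m1 (rowF n1 (m1 + m2) r d1 d2 p.1) (rowF n1 (m1 + m2) r d1 d2 p.2) *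
      (27/23:ℝ) ^ Hcnt m1 (rowF n1 (m1 + m2) r d1 d2 p.1) (rowF n1 (m1 + m2) r d1 d2 p.2)

def S2v (n n1 m1 m2 r : ℕ) (d0 : Fin n → Fin (m1 + m2) → ℕ)
    (d1 : Fin n1 → Fin (m1 + m2) → ℕ) (d2 : Fin n1 → Fin r → ℕ) : ℝ :=
  ∑ i : Fin n, ∑ j : Fin n1,
    (6/5:ℝ) ^ Fcnt m1 (rowI n (m1 + m2) r d0 i) (rowF n1 (m1 + m2) r d1 d2 j) *
      (27/23:ℝ) ^ Hcnt m1 (rowI n (m1 + m2) r d0 i) (rowF n1 (m1 + m2) r d1 d2 j)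

lemma IsUType_lt {N m1 m2 : ℕ} {d : Fin N → Fin (m1 + m2) → ℕ} (h : IsUType N m1 m2 d)
    (i : Fin N) (k : Fin (m1 + m2)) : d i k < if (k : ℕ) < m1 then 2 else 3 := by
  have hk := h k
  by_cases hc : (k : ℕ) < m1
  · rw [if_pos hc] at hk ⊢; exact hk.1 i
  · rw [if_neg hc] at hk ⊢; exact hk.1 i

lemma IsUType_card2 {N m1 m2 : ℕ} {d : Fin N → Fin (m1 + m2) → ℕ} (h : IsUType N m1 m2 d)
    (k : Fin (m1 + m2)) (hc : (k : ℕ) < m1) {v : ℕ} (hv : v < 2) :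
    2 * (univ.filter fun i => d i k = v).card = N := by
  have hk := h k; rw [if_pos hc] at hk; exact hk.2 v hv

lemma IsUType_card3 {N m1 m2 : ℕ} {d : Fin N → Fin (m1 + m2) → ℕ} (h : IsUType N m1 m2 d)
    (k : Fin (m1 + m2)) (hc : ¬ (k : ℕ) < m1) {v : ℕ} (hv : v < 3) :
    3 * (univ.filter fun i => d i k = v).card = N := by
  have hk := h k; rw [if_neg hc] at hk; exact hk.2 v hv

lemma qfun_lt (m1 m2 r k : ℕ) (hk : k < m1 + m2 + r) :
    qfun m1 m2 r k = if k < m1 then 2 else 3 := by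
  unfold qfun; split_ifs <;> first | rfl | omega

lemma qfun_last (m1 m2 r : ℕ) : qfun m1 m2 r (m1 + m2 + r) = 2 := by
  unfold qfun; split_ifs <;> first | rfl | omega

lemma aug_row_init (n n1 m r : ℕ) (d0 : Fin n → Fin m → ℕ) (d1 : Fin n1 → Fin m → ℕ)
    (d2 : Fin n1 → Fin r → ℕ) (i : Fin n) :
    augDesign n n1 m r d0 d1 d2 (Fin.castAdd n1 i) = rowI n m r d0 i := by
  funext k
  simp [augDesign, rowI, i.isLt]

lemma aug_row_fol (n n1 m r : ℕ) (d0 : Fin n → Fin m → ℕ) (d1 : Fin n1 → Fin m → ℕ)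
    (d2 : Fin n1 → Fin r → ℕ) (j : Fin n1) :
    augDesign n n1 m r d0 d1 d2 (Fin.natAdd n j) = rowF n1 m r d1 d2 j := by
  funext k
  have h : ¬ (n + (j:ℕ) < n) := by omega
  simp [augDesign, rowF, h, Nat.add_sub_cancel_left]

lemma rowI_cast (n m r : ℕ) (d0 : Fin n → Fin m → ℕ) (i : Fin n) (k : Fin m) :
    rowI n m r d0 i (Fin.castAdd r k) = d0 i k := by
  simp [rowI, k.isLt]

lemma rowI_nat (n m r : ℕ) (d0 : Fin n → Fin m → ℕ) (i : Fin n) (k : Fin r) :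
    rowI n m r d0 i (Fin.natAdd m k) = 0 := by
  simp [rowI]

lemma appendOne_castSucc {n n1 M : ℕ} (D : Fin (n + n1) → Fin M → ℕ) (i : Fin (n + n1))
    (k : Fin M) : appendOne n n1 M D i k.castSucc = D i k := by
  simp [appendOne, k.isLt]

lemma appendOne_last {n n1 M : ℕ} (D : Fin (n + n1) → Fin M → ℕ) (i : Fin (n + n1)) :
    appendOne n n1 M D i (Fin.last M) = if (i : ℕ) < n then 0 else 1 := by
  simp [appendOne]

lemma sum_split_diag {α : Type*} [Fintype α] [DecidableEq α] (f : α → α → ℝ) :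
    ∑ i : α, ∑ j : α, f i j
      = (∑ i : α, f i i) + ∑ p ∈ (univ : Finset α).offDiag, f p.1 p.2 := by
  have h1 : ∑ p ∈ ((univ : Finset α) ×ˢ univ), f p.1 p.2 = ∑ i, ∑ j, f i j := by
    rw [Finset.sum_product]
  rw [← h1, ← Finset.diag_union_offDiag, Finset.sum_union (Finset.disjoint_diag_offDiag _)]
  congr 1
  rw [show (univ : Finset α).diag = Finset.image (fun a => (a, a)) univ by
      ext ⟨a, b⟩
      simp [Finset.mem_diag, Prod.ext_iff, eq_comm]]
  rw [Finset.sum_image (fun x _ y _ h => congrArg Prod.fst h)]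

lemma identityPair (n n1 m1 m2 r : ℕ) (hn : 1 ≤ n)
    (d0 : Fin n → Fin (m1 + m2) → ℕ) (d1 : Fin n1 → Fin (m1 + m2) → ℕ)
    (d2 : Fin n1 → Fin r → ℕ)
    (hd0 : IsUType n m1 m2 d0) (hd1 : IsUType n1 m1 m2 d1) (hd2 : IsBalanced n1 r d2) :
    WD (fun k : Fin (m1 + m2 + r) => qfun m1 m2 r (k : ℕ)) (augDesign n n1 (m1 + m2) r d0 d1 d2)
      = -((4:ℝ)/3) ^ (m1 + m2 + r) + (1 / ((n:ℝ) + n1) ^ 2) *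
          ((3/2:ℝ) ^ r * (n:ℝ) ^ 2 *
              (WD (fun k : Fin (m1 + m2) => qfun m1 m2 0 (k : ℕ)) d0 + (4/3:ℝ) ^ (m1 + m2))
            + (n1:ℝ) * (3/2:ℝ) ^ (m1 + m2 + r)
            + (5/4:ℝ) ^ m1 * (23/18:ℝ) ^ (m2 + r) * S1v n1 m1 m2 r d1 d2
            + 2 * ((5/4:ℝ) ^ m1 * (23/18:ℝ) ^ (m2 + r)) * S2v n n1 m1 m2 r d0 d1 d2) ∧
    WD (fun k : Fin (m1 + m2 + r + 1) => qfun m1 m2 r (k : ℕ))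
        (appendOne n n1 (m1 + m2 + r) (augDesign n n1 (m1 + m2) r d0 d1 d2))
      = -((4:ℝ)/3) ^ (m1 + m2 + r + 1) + (1 / ((n:ℝ) + n1) ^ 2) *
          ((3/2:ℝ) * ((3/2:ℝ) ^ r * (n:ℝ) ^ 2 *
              (WD (fun k : Fin (m1 + m2) => qfun m1 m2 0 (k : ℕ)) d0 + (4/3:ℝ) ^ (m1 + m2)))
            + (3/2:ℝ) * ((n1:ℝ) * (3/2:ℝ) ^ (m1 + m2 + r))
            + (3/2:ℝ) * ((5/4:ℝ) ^ m1 * (23/18:ℝ) ^ (m2 + r) * S1v n1 m1 m2 r d1 d2)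
            + (5/2:ℝ) * ((5/4:ℝ) ^ m1 * (23/18:ℝ) ^ (m2 + r) *
                S2v n n1 m1 m2 r d0 d1 d2)) := by
  have hm1M : m1 ≤ m1 + m2 + r := by omega
  set D := augDesign n n1 (m1 + m2) r d0 d1 d2 with hD_def
  set c : Fin (m1 + m2 + r) → ℝ := fun k => ccf m1 (k : ℕ) with hc_def
  set c0 : Fin (m1 + m2) → ℝ := fun k => ccf m1 (k : ℕ) with hc0_def
  -- entry bounds
  have hDlt : ∀ i k, D i k < (if (k : ℕ) < m1 then 2 else 3) := by
    intro i k
    rw [hD_def]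
    unfold augDesign
    by_cases hi : (i : ℕ) < n
    · rw [dif_pos hi]
      by_cases hk : (k : ℕ) < m1 + m2
      · rw [dif_pos hk]; exact IsUType_lt hd0 _ ⟨k, hk⟩
      · rw [dif_neg hk]; split_ifs <;> norm_num
    · rw [dif_neg hi]
      by_cases hk : (k : ℕ) < m1 + m2
      · rw [dif_pos hk]; exact IsUType_lt hd1 _ ⟨k, hk⟩
      · rw [dif_neg hk]
        rcases hd2.1 ⟨(i : ℕ) - n, by have := i.isLt; omega⟩
            ⟨(k : ℕ) - (m1 + m2), by have := k.isLt; omega⟩ with h | h <;> rw [h] <;>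
          split_ifs <;> omega
  have hx3 : ∀ i k, D i k < qfun m1 m2 r (k : ℕ) := fun i k => by
    rw [qfun_lt _ _ _ _ k.isLt]; exact hDlt i k
  have hq3 : ∀ k : Fin (m1 + m2 + r),
      qfun m1 m2 r (k : ℕ) = 2 ∨ qfun m1 m2 r (k : ℕ) = 3 := fun k => by
    rw [qfun_lt _ _ _ _ k.isLt]; split_ifs <;> simp
  have hcfun : (fun k : Fin (m1 + m2 + r) =>
      if qfun m1 m2 r (k : ℕ) = 2 then (5/4:ℝ) else 23/18) = c := by
    funext k
    rw [qfun_lt _ _ _ _ k.isLt, hc_def]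
    by_cases hk : (k : ℕ) < m1 <;> simp [hk, ccf]
  have hW3 := WD_eq _ _ hq3 hx3
  rw [hcfun] at hW3
  -- d0
  have hx0 : ∀ i k, d0 i k < qfun m1 m2 0 (k : ℕ) := fun i k => by
    rw [qfun_lt m1 m2 0 _ (by have := k.isLt; omega)]; exact IsUType_lt hd0 i k
  have hq0 : ∀ k : Fin (m1 + m2),
      qfun m1 m2 0 (k : ℕ) = 2 ∨ qfun m1 m2 0 (k : ℕ) = 3 := fun k => by
    rw [qfun_lt m1 m2 0 _ (by have := k.isLt; omega)]; split_ifs <;> simp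
  have hcfun0 : (fun k : Fin (m1 + m2) =>
      if qfun m1 m2 0 (k : ℕ) = 2 then (5/4:ℝ) else 23/18) = c0 := by
    funext k
    rw [qfun_lt m1 m2 0 _ (by have := k.isLt; omega), hc0_def]
    by_cases hk : (k : ℕ) < m1 <;> simp [hk, ccf]
  have hW0 := WD_eq _ _ hq0 hx0
  rw [hcfun0] at hW0
  have hn0 : (n : ℝ) ≠ 0 := by positivity
  have hSD0 : (3/2:ℝ) ^ r * (n:ℝ) ^ 2 *
      (WD (fun k : Fin (m1 + m2) => qfun m1 m2 0 (k : ℕ)) d0 + (4/3:ℝ) ^ (m1 + m2))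
      = (3/2:ℝ) ^ r * ∑ i : Fin n, ∑ j : Fin n, GpC c0 (d0 i) (d0 j) := by
    rw [hW0]
    field_simp
    ring
  -- per-pair lemmas
  have hGII : ∀ i i' : Fin n,
      GpC c (rowI n (m1 + m2) r d0 i) (rowI n (m1 + m2) r d0 i')
        = (3/2:ℝ) ^ r * GpC c0 (d0 i) (d0 i') := by
    intro i i'
    unfold GpC
    rw [Fin.prod_univ_add]
    have h1 : ∀ k : Fin (m1 + m2),
        (if rowI n (m1 + m2) r d0 i (Fin.castAdd r k)
            = rowI n (m1 + m2) r d0 i' (Fin.castAdd r k) then (3:ℝ)/2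
          else c (Fin.castAdd r k))
        = (if d0 i k = d0 i' k then (3:ℝ)/2 else c0 k) := by
      intro k; rw [rowI_cast, rowI_cast]; rfl
    have h2 : ∀ k : Fin r,
        (if rowI n (m1 + m2) r d0 i (Fin.natAdd (m1 + m2) k)
            = rowI n (m1 + m2) r d0 i' (Fin.natAdd (m1 + m2) k) then (3:ℝ)/2
          else c (Fin.natAdd (m1 + m2) k)) = (3:ℝ)/2 := by
      intro k; rw [rowI_nat, rowI_nat]; exact if_pos rfl
    rw [Finset.prod_congr rfl fun k _ => h1 k, Finset.prod_congr rfl fun k _ => h2 k,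
      Finset.prod_const, Finset.card_univ, Fintype.card_fin, mul_comm]
  have hexp : m1 + m2 + r - m1 = m2 + r := by omega
  have hGfac : ∀ u v : Fin (m1 + m2 + r) → ℕ,
      GpC c u v = (5/4:ℝ) ^ m1 * (23/18:ℝ) ^ (m2 + r) *
        ((6/5:ℝ) ^ Fcnt m1 u v * (27/23:ℝ) ^ Hcnt m1 u v) := by
    intro u v
    rw [hc_def, Gp_factor m1 hm1M u v, hexp]
  -- row rewrites
  have hrI : ∀ i : Fin n, D (Fin.castAdd n1 i) = rowI n (m1 + m2) r d0 i :=
    aug_row_init n n1 (m1 + m2) r d0 d1 d2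
  have hrF : ∀ j : Fin n1, D (Fin.natAdd n j) = rowF n1 (m1 + m2) r d1 d2 j :=
    aug_row_fol n n1 (m1 + m2) r d0 d1 d2
  -- block values
  have hA00 : ∑ i : Fin n, ∑ i' : Fin n,
      GpC c (rowI n (m1 + m2) r d0 i) (rowI n (m1 + m2) r d0 i')
      = (3/2:ℝ) ^ r * ∑ i : Fin n, ∑ i' : Fin n, GpC c0 (d0 i) (d0 i') := by
    rw [Finset.mul_sum]
    refine Finset.sum_congr rfl fun i _ => ?_
    rw [Finset.mul_sum]
    exact Finset.sum_congr rfl fun i' _ => hGII i i'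
  have hA11 : ∑ j : Fin n1, ∑ j' : Fin n1,
      GpC c (rowF n1 (m1 + m2) r d1 d2 j) (rowF n1 (m1 + m2) r d1 d2 j')
      = (n1:ℝ) * (3/2:ℝ) ^ (m1 + m2 + r)
        + (5/4:ℝ) ^ m1 * (23/18:ℝ) ^ (m2 + r) * S1v n1 m1 m2 r d1 d2 := by
    rw [sum_split_diag (fun j j' =>
      GpC c (rowF n1 (m1 + m2) r d1 d2 j) (rowF n1 (m1 + m2) r d1 d2 j'))]
    congr 1
    · rw [Finset.sum_congr rfl fun j _ => Gp_diag c (rowF n1 (m1 + m2) r d1 d2 j),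
        Finset.sum_const, Finset.card_univ, Fintype.card_fin, nsmul_eq_mul]
    · unfold S1v
      rw [Finset.mul_sum]
      exact Finset.sum_congr rfl fun p _ => hGfac _ _
  have hA01 : ∑ i : Fin n, ∑ j : Fin n1,
      GpC c (rowI n (m1 + m2) r d0 i) (rowF n1 (m1 + m2) r d1 d2 j)
      = (5/4:ℝ) ^ m1 * (23/18:ℝ) ^ (m2 + r) * S2v n n1 m1 m2 r d0 d1 d2 := by
    unfold S2v
    rw [Finset.mul_sum]
    refine Finset.sum_congr rfl fun i _ => ?_
    rw [Finset.mul_sum]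
    exact Finset.sum_congr rfl fun j _ => hGfac _ _
  have hA10 : ∑ j : Fin n1, ∑ i : Fin n,
      GpC c (rowF n1 (m1 + m2) r d1 d2 j) (rowI n (m1 + m2) r d0 i)
      = (5/4:ℝ) ^ m1 * (23/18:ℝ) ^ (m2 + r) * S2v n n1 m1 m2 r d0 d1 d2 := by
    rw [Finset.sum_comm]
    rw [Finset.sum_congr rfl fun i _ => Finset.sum_congr rfl fun j _ => Gp_symm c _ _]
    exact hA01
  -- splitting of the full double sum
  have hsplit : (∑ i, ∑ j, GpC c (D i) (D j))
      = (∑ i : Fin n, ∑ i' : Fin n, GpC c (D (Fin.castAdd n1 i)) (D (Fin.castAdd n1 i')))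
        + (∑ i : Fin n, ∑ j : Fin n1, GpC c (D (Fin.castAdd n1 i)) (D (Fin.natAdd n j)))
        + ((∑ j : Fin n1, ∑ i : Fin n, GpC c (D (Fin.natAdd n j)) (D (Fin.castAdd n1 i)))
        + (∑ j : Fin n1, ∑ j' : Fin n1, GpC c (D (Fin.natAdd n j)) (D (Fin.natAdd n j')))) := by
    rw [Fin.sum_univ_add]
    congr 1
    · rw [← Finset.sum_add_distrib]
      exact Finset.sum_congr rfl fun i _ => Fin.sum_univ_add _
    · rw [← Finset.sum_add_distrib]
      exact Finset.sum_congr rfl fun j _ => Fin.sum_univ_add _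
  simp only [hrI, hrF] at hsplit
  have hNcast : ((n + n1 : ℕ) : ℝ) = (n : ℝ) + n1 := by push_cast; ring
  constructor
  · rw [hW3, hsplit, hA00, hA01, hA10, hA11, hSD0, hNcast]
    ring
  · -- blocked design
    have hqb : ∀ k : Fin (m1 + m2 + r + 1),
        qfun m1 m2 r (k : ℕ) = 2 ∨ qfun m1 m2 r (k : ℕ) = 3 := by
      intro k
      by_cases hk : (k : ℕ) < m1 + m2 + r
      · rw [qfun_lt _ _ _ _ hk]; split_ifs <;> simp
      · have : (k : ℕ) = m1 + m2 + r := by have := k.isLt; omega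
        rw [this, qfun_last]; left; rfl
    have hxb : ∀ i k, appendOne n n1 (m1 + m2 + r) D i k < qfun m1 m2 r (k : ℕ) := by
      intro i k
      by_cases hk : (k : ℕ) < m1 + m2 + r
      · unfold appendOne
        rw [dif_pos hk, qfun_lt _ _ _ _ hk]
        exact hDlt i ⟨k, hk⟩
      · have hke : (k : ℕ) = m1 + m2 + r := by have := k.isLt; omega
        unfold appendOne
        rw [dif_neg hk, hke, qfun_last]
        split_ifs <;> norm_num
    have hWb := WD_eq _ _ hqb hxb
    have hcb : ∀ k : Fin (m1 + m2 + r),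
        (if qfun m1 m2 r ((k.castSucc : Fin (m1 + m2 + r + 1)) : ℕ) = 2 then (5/4:ℝ) else 23/18)
          = c k := by
      intro k
      rw [hc_def]
      show (if qfun m1 m2 r (k : ℕ) = 2 then (5/4:ℝ) else 23/18) = ccf m1 (k : ℕ)
      rw [qfun_lt _ _ _ _ k.isLt]
      by_cases hk : (k : ℕ) < m1 <;> simp [hk, ccf]
    have hcbLast :
        (if qfun m1 m2 r ((Fin.last (m1 + m2 + r) : Fin (m1 + m2 + r + 1)) : ℕ) = 2
          then (5/4:ℝ) else 23/18) = (5/4:ℝ) := by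
      show (if qfun m1 m2 r (m1 + m2 + r) = 2 then (5/4:ℝ) else 23/18) = 5/4
      rw [qfun_last]
      rfl
    have hGb : ∀ i j : Fin (n + n1),
        GpC (fun k : Fin (m1 + m2 + r + 1) => if qfun m1 m2 r (k : ℕ) = 2 then (5/4:ℝ) else 23/18)
            (appendOne n n1 (m1 + m2 + r) D i) (appendOne n n1 (m1 + m2 + r) D j)
          = GpC c (D i) (D j) *
            (if (i : ℕ) < n then (if (j : ℕ) < n then (3/2:ℝ) else 5/4)
             else (if (j : ℕ) < n then (5/4:ℝ) else 3/2)) := by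
      intro i j
      unfold GpC
      rw [Fin.prod_univ_castSucc]
      congr 1
      · refine Finset.prod_congr rfl fun k _ => ?_
        rw [appendOne_castSucc, appendOne_castSucc]
        simp only [hcb k]
      · rw [appendOne_last, appendOne_last]
        simp only [hcbLast]
        by_cases hi : (i : ℕ) < n <;> by_cases hj : (j : ℕ) < n <;> simp [hi, hj]
    rw [Finset.sum_congr rfl fun i _ => Finset.sum_congr rfl fun j _ => hGb i j] at hWb
    have hsplitb : (∑ i, ∑ j, GpC c (D i) (D j) *
        (if (i : ℕ) < n then (if (j : ℕ) < n then (3/2:ℝ) else 5/4)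
         else (if (j : ℕ) < n then (5/4:ℝ) else 3/2)))
        = (∑ i : Fin n, ∑ i' : Fin n,
            GpC c (D (Fin.castAdd n1 i)) (D (Fin.castAdd n1 i')) * (3/2:ℝ))
          + (∑ i : Fin n, ∑ j : Fin n1,
              GpC c (D (Fin.castAdd n1 i)) (D (Fin.natAdd n j)) * (5/4:ℝ))
          + ((∑ j : Fin n1, ∑ i : Fin n,
              GpC c (D (Fin.natAdd n j)) (D (Fin.castAdd n1 i)) * (5/4:ℝ))
          + (∑ j : Fin n1, ∑ j' : Fin n1,
              GpC c (D (Fin.natAdd n j)) (D (Fin.natAdd n j')) * (3/2:ℝ))) := by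
      rw [Fin.sum_univ_add]
      congr 1
      · rw [← Finset.sum_add_distrib]
        refine Finset.sum_congr rfl fun a _ => ?_
        rw [Fin.sum_univ_add]
        congr 1
        · refine Finset.sum_congr rfl fun b _ => ?_
          simp only [Fin.coe_castAdd]
          rw [if_pos a.isLt, if_pos b.isLt]
        · refine Finset.sum_congr rfl fun b _ => ?_
          simp only [Fin.coe_castAdd, Fin.coe_natAdd]
          rw [if_pos a.isLt, if_neg (by omega : ¬ (n + (b:ℕ) < n))]
      · rw [← Finset.sum_add_distrib]
        refine Finset.sum_congr rfl fun a _ => ?_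
        rw [Fin.sum_univ_add]
        congr 1
        · refine Finset.sum_congr rfl fun b _ => ?_
          simp only [Fin.coe_castAdd, Fin.coe_natAdd]
          rw [if_neg (by omega : ¬ (n + (a:ℕ) < n)), if_pos b.isLt]
        · refine Finset.sum_congr rfl fun b _ => ?_
          simp only [Fin.coe_natAdd]
          rw [if_neg (by omega : ¬ (n + (a:ℕ) < n)), if_neg (by omega : ¬ (n + (b:ℕ) < n))]
    rw [hsplitb] at hWb
    simp only [hrI, hrF] at hWb
    have pull : ∀ {A B : Type} [Fintype A] [Fintype B] (g : A → B → ℝ) (t : ℝ),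
        (∑ a : A, ∑ b : B, g a b * t) = (∑ a : A, ∑ b : B, g a b) * t := by
      intro A B _ _ g t
      rw [Finset.sum_mul]
      exact Finset.sum_congr rfl fun a _ => (Finset.sum_mul _ _ _).symm
    rw [pull, pull, pull, pull, hA00, hA01, hA10, hA11] at hWb
    rw [hWb, hSD0, hNcast]
    ring

lemma rowF_lt {n1 m r : ℕ} (d1 : Fin n1 → Fin m → ℕ) (d2 : Fin n1 → Fin r → ℕ)
    (j : Fin n1) (k : Fin (m + r)) (hk : (k : ℕ) < m) :
    rowF n1 m r d1 d2 j k = d1 j ⟨k, hk⟩ := by simp [rowF, hk]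

lemma rowF_ge {n1 m r : ℕ} (d1 : Fin n1 → Fin m → ℕ) (d2 : Fin n1 → Fin r → ℕ)
    (j : Fin n1) (k : Fin (m + r)) (hk : ¬ (k : ℕ) < m) :
    rowF n1 m r d1 d2 j k = d2 j ⟨(k : ℕ) - m, by have := k.isLt; omega⟩ := by
  simp [rowF, hk]

lemma rowI_lt {n m r : ℕ} (d0 : Fin n → Fin m → ℕ) (i : Fin n) (k : Fin (m + r))
    (hk : (k : ℕ) < m) : rowI n m r d0 i k = d0 i ⟨k, hk⟩ := by simp [rowI, hk]

lemma rowI_ge {n m r : ℕ} (d0 : Fin n → Fin m → ℕ) (i : Fin n) (k : Fin (m + r))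
    (hk : ¬ (k : ℕ) < m) : rowI n m r d0 i k = 0 := by simp [rowI, hk]

lemma Fcnt_cast {M : ℕ} (m1 : ℕ) (u v : Fin M → ℕ) :
    ((Fcnt m1 u v : ℕ) : ℝ) = ∑ k : Fin M, (if (k : ℕ) < m1 ∧ u k = v k then (1:ℝ) else 0) := by
  unfold Fcnt; push_cast; rfl

lemma Hcnt_cast {M : ℕ} (m1 : ℕ) (u v : Fin M → ℕ) :
    ((Hcnt m1 u v : ℕ) : ℝ) = ∑ k : Fin M, (if m1 ≤ (k : ℕ) ∧ u k = v k then (1:ℝ) else 0) := by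
  unfold Hcnt; push_cast; rfl

lemma sum_fin_trichotomy (m1 m2 r : ℕ) (A B C : ℝ) :
    ∑ k : Fin (m1 + m2 + r),
      (if (k : ℕ) < m1 then A else if (k : ℕ) < m1 + m2 then B else C)
    = m1 * A + m2 * B + r * C := by
  rw [Fin.sum_univ_eq_sum_range (fun k => if k < m1 then A else if k < m1 + m2 then B else C),
    Finset.sum_range_add (fun k => if k < m1 then A else if k < m1 + m2 then B else C) (m1 + m2) r,
    Finset.sum_range_add (fun k => if k < m1 then A else if k < m1 + m2 then B else C) m1 m2]
  have h1 : ∀ k ∈ Finset.range m1,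
      (if k < m1 then A else if k < m1 + m2 then B else C) = A := fun k hk => by
    rw [if_pos (Finset.mem_range.mp hk)]
  have h2 : ∀ k ∈ Finset.range m2,
      (if m1 + k < m1 then A else if m1 + k < m1 + m2 then B else C) = B := fun k hk => by
    rw [if_neg (by omega), if_pos (by have := Finset.mem_range.mp hk; omega)]
  have h3 : ∀ k ∈ Finset.range r,
      (if m1 + m2 + k < m1 then A else if m1 + m2 + k < m1 + m2 then B else C) = C :=
    fun k hk => by rw [if_neg (by omega), if_neg (by omega)]
  rw [Finset.sum_congr rfl h1, Finset.sum_congr rfl h2, Finset.sum_congr rfl h3,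
    Finset.sum_const, Finset.sum_const, Finset.sum_const, Finset.card_range,
    Finset.card_range, Finset.card_range, nsmul_eq_mul, nsmul_eq_mul, nsmul_eq_mul]

-- cardinality facts from balance hypotheses
lemma card_half {N : ℕ} {s : Finset (Fin N)} (h : 2 * s.card = N) : (s.card : ℝ) = N / 2 := by
  have : (2 : ℝ) * s.card = N := by exact_mod_cast h
  linarith

lemma card_third {N : ℕ} {s : Finset (Fin N)} (h : 3 * s.card = N) : (s.card : ℝ) = N / 3 := by
  have : (3 : ℝ) * s.card = N := by exact_mod_cast h
  linarith

lemma sum_Fcnt_offDiag (n1 m1 m2 r : ℕ) (d1 : Fin n1 → Fin (m1 + m2) → ℕ)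
    (d2 : Fin n1 → Fin r → ℕ) (hd1 : IsUType n1 m1 m2 d1) :
    ∑ p ∈ (univ : Finset (Fin n1)).offDiag,
      ((Fcnt m1 (rowF n1 (m1 + m2) r d1 d2 p.1) (rowF n1 (m1 + m2) r d1 d2 p.2) : ℕ) : ℝ)
    = m1 * ((n1:ℝ) ^ 2 / 2 - n1) := by
  rw [Finset.sum_congr rfl fun p _ => Fcnt_cast _ _ _, Finset.sum_comm]
  have hcol : ∀ k : Fin (m1 + m2 + r),
      (∑ p ∈ (univ : Finset (Fin n1)).offDiag,
        (if (k : ℕ) < m1 ∧ rowF n1 (m1 + m2) r d1 d2 p.1 k = rowF n1 (m1 + m2) r d1 d2 p.2 k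
         then (1:ℝ) else 0))
      = if (k : ℕ) < m1 then ((n1:ℝ) ^ 2 / 2 - n1)
        else if (k : ℕ) < m1 + m2 then 0 else 0 := by
    intro k
    by_cases hk : (k : ℕ) < m1
    · rw [if_pos hk]
      have hk2 : (k : ℕ) < m1 + m2 := by omega
      have hstep : ∀ p ∈ (univ : Finset (Fin n1)).offDiag,
          (if (k : ℕ) < m1 ∧ rowF n1 (m1 + m2) r d1 d2 p.1 k = rowF n1 (m1 + m2) r d1 d2 p.2 k
           then (1:ℝ) else 0)
          = (if d1 p.1 ⟨(k : ℕ), hk2⟩ = d1 p.2 ⟨(k : ℕ), hk2⟩ then (1:ℝ) else 0) := by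
        intro p _
        rw [rowF_lt _ _ _ _ hk2, rowF_lt _ _ _ _ hk2]
        exact if_congr (and_iff_right hk) rfl rfl
      rw [Finset.sum_congr rfl hstep]
      have hs := sum_split_diag
        (fun i j : Fin n1 => if d1 i ⟨(k : ℕ), hk2⟩ = d1 j ⟨(k : ℕ), hk2⟩ then (1:ℝ) else 0)
      have hdiag : (∑ i : Fin n1,
          (if d1 i ⟨(k : ℕ), hk2⟩ = d1 i ⟨(k : ℕ), hk2⟩ then (1:ℝ) else 0)) = n1 := by simp
      have hfull : (∑ i : Fin n1, ∑ j : Fin n1,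
          (if d1 i ⟨(k : ℕ), hk2⟩ = d1 j ⟨(k : ℕ), hk2⟩ then (1:ℝ) else 0)) = (n1:ℝ) ^ 2 / 2 := by
        rw [count_pairs _ _ 2
          (fun i => by have := IsUType_lt hd1 i ⟨(k : ℕ), hk2⟩; rwa [if_pos hk] at this)
          (fun j => by have := IsUType_lt hd1 j ⟨(k : ℕ), hk2⟩; rwa [if_pos hk] at this)]
        rw [Finset.sum_range_succ, Finset.sum_range_succ, Finset.sum_range_zero]
        rw [card_half (IsUType_card2 hd1 ⟨(k : ℕ), hk2⟩ hk (by norm_num : (0:ℕ) < 2)),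
          card_half (IsUType_card2 hd1 ⟨(k : ℕ), hk2⟩ hk (by norm_num : (1:ℕ) < 2))]
        ring
      rw [hdiag, hfull] at hs
      linarith
    · rw [if_neg hk]
      rw [Finset.sum_congr rfl (fun p _ => if_neg (fun h => hk h.1)), Finset.sum_const,
        smul_zero]
      split_ifs <;> rfl
  rw [Finset.sum_congr rfl fun k _ => hcol k, sum_fin_trichotomy]
  ring

lemma sum_Hcnt_offDiag (n1 m1 m2 r : ℕ) (d1 : Fin n1 → Fin (m1 + m2) → ℕ)
    (d2 : Fin n1 → Fin r → ℕ) (hd1 : IsUType n1 m1 m2 d1) (hd2 : IsBalanced n1 r d2) :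
    ∑ p ∈ (univ : Finset (Fin n1)).offDiag,
      ((Hcnt m1 (rowF n1 (m1 + m2) r d1 d2 p.1) (rowF n1 (m1 + m2) r d1 d2 p.2) : ℕ) : ℝ)
    = m2 * ((n1:ℝ) ^ 2 / 3 - n1) + r * ((n1:ℝ) ^ 2 / 2 - n1) := by
  rw [Finset.sum_congr rfl fun p _ => Hcnt_cast _ _ _, Finset.sum_comm]
  have hcol : ∀ k : Fin (m1 + m2 + r),
      (∑ p ∈ (univ : Finset (Fin n1)).offDiag,
        (if m1 ≤ (k : ℕ) ∧ rowF n1 (m1 + m2) r d1 d2 p.1 k = rowF n1 (m1 + m2) r d1 d2 p.2 k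
         then (1:ℝ) else 0))
      = if (k : ℕ) < m1 then 0
        else if (k : ℕ) < m1 + m2 then ((n1:ℝ) ^ 2 / 3 - n1) else ((n1:ℝ) ^ 2 / 2 - n1) := by
    intro k
    by_cases hk : (k : ℕ) < m1
    · rw [if_pos hk]
      rw [Finset.sum_congr rfl (fun p _ => if_neg (fun h => absurd h.1 (by omega))),
        Finset.sum_const, smul_zero]
    · rw [if_neg hk]
      by_cases hk2 : (k : ℕ) < m1 + m2
      · rw [if_pos hk2]
        have hstep : ∀ p ∈ (univ : Finset (Fin n1)).offDiag,
            (if m1 ≤ (k : ℕ) ∧ rowF n1 (m1 + m2) r d1 d2 p.1 k = rowF n1 (m1 + m2) r d1 d2 p.2 k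
             then (1:ℝ) else 0)
            = (if d1 p.1 ⟨(k : ℕ), hk2⟩ = d1 p.2 ⟨(k : ℕ), hk2⟩ then (1:ℝ) else 0) := by
          intro p _
          rw [rowF_lt _ _ _ _ hk2, rowF_lt _ _ _ _ hk2]
          exact if_congr (and_iff_right (by omega)) rfl rfl
        rw [Finset.sum_congr rfl hstep]
        have hs := sum_split_diag
          (fun i j : Fin n1 => if d1 i ⟨(k : ℕ), hk2⟩ = d1 j ⟨(k : ℕ), hk2⟩ then (1:ℝ) else 0)
        have hdiag : (∑ i : Fin n1,
            (if d1 i ⟨(k : ℕ), hk2⟩ = d1 i ⟨(k : ℕ), hk2⟩ then (1:ℝ) else 0)) = n1 := by simp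
        have hfull : (∑ i : Fin n1, ∑ j : Fin n1,
            (if d1 i ⟨(k : ℕ), hk2⟩ = d1 j ⟨(k : ℕ), hk2⟩ then (1:ℝ) else 0))
            = (n1:ℝ) ^ 2 / 3 := by
          rw [count_pairs _ _ 3
            (fun i => by have := IsUType_lt hd1 i ⟨(k : ℕ), hk2⟩; rwa [if_neg hk] at this)
            (fun j => by have := IsUType_lt hd1 j ⟨(k : ℕ), hk2⟩; rwa [if_neg hk] at this)]
          rw [Finset.sum_range_succ, Finset.sum_range_succ, Finset.sum_range_succ,
            Finset.sum_range_zero]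
          rw [card_third (IsUType_card3 hd1 ⟨(k : ℕ), hk2⟩ hk (by norm_num : (0:ℕ) < 3)),
            card_third (IsUType_card3 hd1 ⟨(k : ℕ), hk2⟩ hk (by norm_num : (1:ℕ) < 3)),
            card_third (IsUType_card3 hd1 ⟨(k : ℕ), hk2⟩ hk (by norm_num : (2:ℕ) < 3))]
          ring
        rw [hdiag, hfull] at hs
        linarith
      · rw [if_neg hk2]
        have hk3 : (k : ℕ) - (m1 + m2) < r := by have := k.isLt; omega
        have hstep : ∀ p ∈ (univ : Finset (Fin n1)).offDiag,
            (if m1 ≤ (k : ℕ) ∧ rowF n1 (m1 + m2) r d1 d2 p.1 k = rowF n1 (m1 + m2) r d1 d2 p.2 k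
             then (1:ℝ) else 0)
            = (if d2 p.1 ⟨(k : ℕ) - (m1 + m2), hk3⟩ = d2 p.2 ⟨(k : ℕ) - (m1 + m2), hk3⟩
               then (1:ℝ) else 0) := by
          intro p _
          rw [rowF_ge _ _ _ _ hk2, rowF_ge _ _ _ _ hk2]
          exact if_congr (and_iff_right (by omega)) rfl rfl
        rw [Finset.sum_congr rfl hstep]
        have hs := sum_split_diag (fun i j : Fin n1 =>
          if d2 i ⟨(k : ℕ) - (m1 + m2), hk3⟩ = d2 j ⟨(k : ℕ) - (m1 + m2), hk3⟩
          then (1:ℝ) else 0)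
        have hdiag : (∑ i : Fin n1,
            (if d2 i ⟨(k : ℕ) - (m1 + m2), hk3⟩ = d2 i ⟨(k : ℕ) - (m1 + m2), hk3⟩
             then (1:ℝ) else 0)) = n1 := by simp
        have hzero : ((univ.filter fun i : Fin n1 =>
            d2 i ⟨(k : ℕ) - (m1 + m2), hk3⟩ = 0).card : ℝ) = 0 := by
          rw [Finset.filter_false_of_mem
            (fun i _ => by rcases hd2.1 i ⟨(k : ℕ) - (m1 + m2), hk3⟩ with h | h <;> omega)]
          simp
        have hfull : (∑ i : Fin n1, ∑ j : Fin n1,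
            (if d2 i ⟨(k : ℕ) - (m1 + m2), hk3⟩ = d2 j ⟨(k : ℕ) - (m1 + m2), hk3⟩
             then (1:ℝ) else 0)) = (n1:ℝ) ^ 2 / 2 := by
          rw [count_pairs _ _ 3
            (fun i => by rcases hd2.1 i ⟨(k : ℕ) - (m1 + m2), hk3⟩ with h | h <;> omega)
            (fun j => by rcases hd2.1 j ⟨(k : ℕ) - (m1 + m2), hk3⟩ with h | h <;> omega)]
          rw [Finset.sum_range_succ, Finset.sum_range_succ, Finset.sum_range_succ,
            Finset.sum_range_zero]
          rw [hzero, card_half ((hd2.2 ⟨(k : ℕ) - (m1 + m2), hk3⟩).1),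
            card_half ((hd2.2 ⟨(k : ℕ) - (m1 + m2), hk3⟩).2)]
          ring
        rw [hdiag, hfull] at hs
        linarith
  rw [Finset.sum_congr rfl fun k _ => hcol k, sum_fin_trichotomy]
  ring

lemma sum_Fcnt_cross (n n1 m1 m2 r : ℕ) (d0 : Fin n → Fin (m1 + m2) → ℕ)
    (d1 : Fin n1 → Fin (m1 + m2) → ℕ) (d2 : Fin n1 → Fin r → ℕ)
    (hd0 : IsUType n m1 m2 d0) (hd1 : IsUType n1 m1 m2 d1) :
    ∑ i : Fin n, ∑ j : Fin n1,
      ((Fcnt m1 (rowI n (m1 + m2) r d0 i) (rowF n1 (m1 + m2) r d1 d2 j) : ℕ) : ℝ)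
    = m1 * ((n:ℝ) * n1 / 2) := by
  rw [Finset.sum_congr rfl fun i _ => Finset.sum_congr rfl fun j _ => Fcnt_cast _ _ _]
  rw [Finset.sum_congr rfl fun i _ => Finset.sum_comm, Finset.sum_comm]
  have hcol : ∀ k : Fin (m1 + m2 + r),
      (∑ i : Fin n, ∑ j : Fin n1,
        (if (k : ℕ) < m1 ∧ rowI n (m1 + m2) r d0 i k = rowF n1 (m1 + m2) r d1 d2 j k
         then (1:ℝ) else 0))
      = if (k : ℕ) < m1 then ((n:ℝ) * n1 / 2)
        else if (k : ℕ) < m1 + m2 then 0 else 0 := by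
    intro k
    by_cases hk : (k : ℕ) < m1
    · rw [if_pos hk]
      have hk2 : (k : ℕ) < m1 + m2 := by omega
      have hstep : ∀ i : Fin n, ∀ j : Fin n1,
          (if (k : ℕ) < m1 ∧ rowI n (m1 + m2) r d0 i k = rowF n1 (m1 + m2) r d1 d2 j k
           then (1:ℝ) else 0)
          = (if d0 i ⟨(k : ℕ), hk2⟩ = d1 j ⟨(k : ℕ), hk2⟩ then (1:ℝ) else 0) := by
        intro i j
        rw [rowI_lt _ _ _ hk2, rowF_lt _ _ _ _ hk2]
        exact if_congr (and_iff_right hk) rfl rfl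
      rw [Finset.sum_congr rfl fun i _ => Finset.sum_congr rfl fun j _ => hstep i j]
      rw [count_pairs _ _ 2
        (fun i => by have := IsUType_lt hd0 i ⟨(k : ℕ), hk2⟩; rwa [if_pos hk] at this)
        (fun j => by have := IsUType_lt hd1 j ⟨(k : ℕ), hk2⟩; rwa [if_pos hk] at this)]
      rw [Finset.sum_range_succ, Finset.sum_range_succ, Finset.sum_range_zero]
      rw [card_half (IsUType_card2 hd0 ⟨(k : ℕ), hk2⟩ hk (by norm_num : (0:ℕ) < 2)),
        card_half (IsUType_card2 hd0 ⟨(k : ℕ), hk2⟩ hk (by norm_num : (1:ℕ) < 2)),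
        card_half (IsUType_card2 hd1 ⟨(k : ℕ), hk2⟩ hk (by norm_num : (0:ℕ) < 2)),
        card_half (IsUType_card2 hd1 ⟨(k : ℕ), hk2⟩ hk (by norm_num : (1:ℕ) < 2))]
      ring
    · rw [if_neg hk]
      rw [Finset.sum_congr rfl fun i _ => Finset.sum_congr rfl
        (fun j _ => if_neg (fun h => hk h.1))]
      simp
  rw [Finset.sum_congr rfl fun k _ => hcol k, sum_fin_trichotomy]
  ring

lemma sum_Hcnt_cross (n n1 m1 m2 r : ℕ) (d0 : Fin n → Fin (m1 + m2) → ℕ)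
    (d1 : Fin n1 → Fin (m1 + m2) → ℕ) (d2 : Fin n1 → Fin r → ℕ)
    (hd0 : IsUType n m1 m2 d0) (hd1 : IsUType n1 m1 m2 d1) (hd2 : IsBalanced n1 r d2) :
    ∑ i : Fin n, ∑ j : Fin n1,
      ((Hcnt m1 (rowI n (m1 + m2) r d0 i) (rowF n1 (m1 + m2) r d1 d2 j) : ℕ) : ℝ)
    = m2 * ((n:ℝ) * n1 / 3) := by
  rw [Finset.sum_congr rfl fun i _ => Finset.sum_congr rfl fun j _ => Hcnt_cast _ _ _]
  rw [Finset.sum_congr rfl fun i _ => Finset.sum_comm, Finset.sum_comm]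
  have hcol : ∀ k : Fin (m1 + m2 + r),
      (∑ i : Fin n, ∑ j : Fin n1,
        (if m1 ≤ (k : ℕ) ∧ rowI n (m1 + m2) r d0 i k = rowF n1 (m1 + m2) r d1 d2 j k
         then (1:ℝ) else 0))
      = if (k : ℕ) < m1 then 0
        else if (k : ℕ) < m1 + m2 then ((n:ℝ) * n1 / 3) else 0 := by
    intro k
    by_cases hk : (k : ℕ) < m1
    · rw [if_pos hk]
      rw [Finset.sum_congr rfl fun i _ => Finset.sum_congr rfl
        (fun j _ => if_neg (fun h => absurd h.1 (by omega)))]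
      simp
    · rw [if_neg hk]
      by_cases hk2 : (k : ℕ) < m1 + m2
      · rw [if_pos hk2]
        have hstep : ∀ i : Fin n, ∀ j : Fin n1,
            (if m1 ≤ (k : ℕ) ∧ rowI n (m1 + m2) r d0 i k = rowF n1 (m1 + m2) r d1 d2 j k
             then (1:ℝ) else 0)
            = (if d0 i ⟨(k : ℕ), hk2⟩ = d1 j ⟨(k : ℕ), hk2⟩ then (1:ℝ) else 0) := by
          intro i j
          rw [rowI_lt _ _ _ hk2, rowF_lt _ _ _ _ hk2]
          exact if_congr (and_iff_right (by omega)) rfl rfl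
        rw [Finset.sum_congr rfl fun i _ => Finset.sum_congr rfl fun j _ => hstep i j]
        rw [count_pairs _ _ 3
          (fun i => by have := IsUType_lt hd0 i ⟨(k : ℕ), hk2⟩; rwa [if_neg hk] at this)
          (fun j => by have := IsUType_lt hd1 j ⟨(k : ℕ), hk2⟩; rwa [if_neg hk] at this)]
        rw [Finset.sum_range_succ, Finset.sum_range_succ, Finset.sum_range_succ,
          Finset.sum_range_zero]
        rw [card_third (IsUType_card3 hd0 ⟨(k : ℕ), hk2⟩ hk (by norm_num : (0:ℕ) < 3)),
          card_third (IsUType_card3 hd0 ⟨(k : ℕ), hk2⟩ hk (by norm_num : (1:ℕ) < 3)),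
          card_third (IsUType_card3 hd0 ⟨(k : ℕ), hk2⟩ hk (by norm_num : (2:ℕ) < 3)),
          card_third (IsUType_card3 hd1 ⟨(k : ℕ), hk2⟩ hk (by norm_num : (0:ℕ) < 3)),
          card_third (IsUType_card3 hd1 ⟨(k : ℕ), hk2⟩ hk (by norm_num : (1:ℕ) < 3)),
          card_third (IsUType_card3 hd1 ⟨(k : ℕ), hk2⟩ hk (by norm_num : (2:ℕ) < 3))]
        ring
      · rw [if_neg hk2]
        have hk3 : (k : ℕ) - (m1 + m2) < r := by have := k.isLt; omega
        have hstep : ∀ i : Fin n, ∀ j : Fin n1,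
            (if m1 ≤ (k : ℕ) ∧ rowI n (m1 + m2) r d0 i k = rowF n1 (m1 + m2) r d1 d2 j k
             then (1:ℝ) else 0) = 0 := by
          intro i j
          refine if_neg (fun h => ?_)
          have h2 := h.2
          rw [rowI_ge _ _ _ hk2, rowF_ge _ _ _ _ hk2] at h2
          rcases hd2.1 j ⟨(k : ℕ) - (m1 + m2), hk3⟩ with hv | hv <;> omega
        rw [Finset.sum_congr rfl fun i _ => Finset.sum_congr rfl fun j _ => hstep i j]
        simp
  rw [Finset.sum_congr rfl fun k _ => hcol k, sum_fin_trichotomy]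
  ring

lemma rowF_mem {n1 m r : ℕ} (d1 : Fin n1 → Fin m → ℕ) {d2 : Fin n1 → Fin r → ℕ}
    (hd2 : IsBalanced n1 r d2) (j : Fin n1) (k : Fin (m + r)) (hk : ¬ (k : ℕ) < m) :
    rowF n1 m r d1 d2 j k = 1 ∨ rowF n1 m r d1 d2 j k = 2 := by
  rw [rowF_ge _ _ _ _ hk]
  exact hd2.1 j _

lemma Fcnt_zero {M : ℕ} (u v : Fin M → ℕ) : Fcnt 0 u v = 0 :=
  Finset.sum_eq_zero fun k _ => if_neg (fun h => absurd h.1 (Nat.not_lt_zero _))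

lemma assemble (N2 P W Wb L Lb S1 S2 B1 B2 : ℝ) (hN2 : 0 < N2) (hP : 0 < P)
    (h1 : B1 ≤ S1) (h2 : B2 ≤ S2)
    (hW : W - L = 1/N2 * (P * (S1 - B1) + 2 * (P * (S2 - B2))))
    (hWb : Wb - Lb = 1/N2 * (3/2 * (P * (S1 - B1)) + 5/2 * (P * (S2 - B2)))) :
    (W = L ↔ Wb = Lb) := by
  have hu : 0 ≤ S1 - B1 := by linarith
  have hv : 0 ≤ S2 - B2 := by linarith
  have hN2' : (0:ℝ) < 1/N2 := by positivity
  have ha : 0 ≤ P * (S1 - B1) := mul_nonneg hP.le hu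
  have hb : 0 ≤ P * (S2 - B2) := mul_nonneg hP.le hv
  constructor <;> intro h
  · have h0 : 1/N2 * (P * (S1 - B1) + 2 * (P * (S2 - B2))) = 0 := by rw [← hW, h]; ring
    have h0' : P * (S1 - B1) + 2 * (P * (S2 - B2)) = 0 :=
      (mul_eq_zero.mp h0).resolve_left (ne_of_gt hN2')
    have e1 : P * (S1 - B1) = 0 := by linarith
    have e2 : P * (S2 - B2) = 0 := by linarith
    have f1 : S1 - B1 = 0 := (mul_eq_zero.mp e1).resolve_left (ne_of_gt hP)
    have f2 : S2 - B2 = 0 := (mul_eq_zero.mp e2).resolve_left (ne_of_gt hP)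
    have : Wb - Lb = 0 := by rw [hWb, f1, f2]; ring
    linarith
  · have h0 : 1/N2 * (3/2 * (P * (S1 - B1)) + 5/2 * (P * (S2 - B2))) = 0 := by
      rw [← hWb, h]; ring
    have h0' : 3/2 * (P * (S1 - B1)) + 5/2 * (P * (S2 - B2)) = 0 :=
      (mul_eq_zero.mp h0).resolve_left (ne_of_gt hN2')
    have e1 : P * (S1 - B1) = 0 := by linarith
    have e2 : P * (S2 - B2) = 0 := by linarith
    have f1 : S1 - B1 = 0 := (mul_eq_zero.mp e1).resolve_left (ne_of_gt hP)
    have f2 : S2 - B2 = 0 := (mul_eq_zero.mp e2).resolve_left (ne_of_gt hP)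
    have : W - L = 0 := by rw [hW, f1, f2]; ring
    linarith

theorem paper_stmt_12 (n n1 m1 m2 r : ℕ) (hn : 1 ≤ n) (hn1 : 2 ≤ n1)
    (hm : 1 ≤ m1 + m2)
    (d0 : Fin n → Fin (m1 + m2) → ℕ) (d1 : Fin n1 → Fin (m1 + m2) → ℕ)
    (d2 : Fin n1 → Fin r → ℕ)
    (hd0 : IsUType n m1 m2 d0) (hd1 : IsUType n1 m1 m2 d1) (hd2 : IsBalanced n1 r d2) :
    (WD (fun k : Fin (m1 + m2 + r) => qfun m1 m2 r (k : ℕ)) (augDesign n n1 (m1 + m2) r d0 d1 d2) = LBW3 n n1 m1 m2 r (WD (fun k : Fin (m1 + m2) => qfun m1 m2 0 (k : ℕ)) d0) ↔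
      WD (fun k : Fin (m1 + m2 + r + 1) => qfun m1 m2 r (k : ℕ)) (appendOne n n1 (m1 + m2 + r) (augDesign n n1 (m1 + m2) r d0 d1 d2)) = LBW3b1 n n1 m1 m2 r (WD (fun k : Fin (m1 + m2) => qfun m1 m2 0 (k : ℕ)) d0)) ∧
    (m2 = 0 →
      (WD (fun k : Fin (m1 + m2 + r) => qfun m1 m2 r (k : ℕ)) (augDesign n n1 (m1 + m2) r d0 d1 d2) = LBW32 n n1 (m1 + m2) r (WD (fun k : Fin (m1 + m2) => qfun m1 m2 0 (k : ℕ)) d0) ↔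
        WD (fun k : Fin (m1 + m2 + r + 1) => qfun m1 m2 r (k : ℕ)) (appendOne n n1 (m1 + m2 + r) (augDesign n n1 (m1 + m2) r d0 d1 d2)) = LBW3b2 n n1 (m1 + m2) r (WD (fun k : Fin (m1 + m2) => qfun m1 m2 0 (k : ℕ)) d0))) ∧
    (m1 = 0 →
      (WD (fun k : Fin (m1 + m2 + r) => qfun m1 m2 r (k : ℕ)) (augDesign n n1 (m1 + m2) r d0 d1 d2) = LBW33 n n1 (m1 + m2) r (WD (fun k : Fin (m1 + m2) => qfun m1 m2 0 (k : ℕ)) d0) ↔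
        WD (fun k : Fin (m1 + m2 + r + 1) => qfun m1 m2 r (k : ℕ)) (appendOne n n1 (m1 + m2 + r) (augDesign n n1 (m1 + m2) r d0 d1 d2)) = LBW3b3 n n1 (m1 + m2) r (WD (fun k : Fin (m1 + m2) => qfun m1 m2 0 (k : ℕ)) d0))) := by
  have hnR : (0:ℝ) < n := by exact_mod_cast hn
  have hn1R : (2:ℝ) ≤ n1 := by exact_mod_cast hn1
  have hNpos : (0:ℝ) < (n:ℝ) + n1 := by
    have : (0:ℝ) ≤ n1 := Nat.cast_nonneg n1
    linarith
  have hN2 : (0:ℝ) < ((n:ℝ) + n1) ^ 2 := pow_pos hNpos 2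
  have hP : (0:ℝ) < (5/4:ℝ) ^ m1 * (23/18:ℝ) ^ (m2 + r) := by positivity
  have hne1 : (n1:ℝ) - 1 ≠ 0 := by
    have : (1:ℝ) < n1 := by linarith
    exact ne_of_gt (by linarith)
  obtain ⟨hID3, hIDb⟩ := identityPair n n1 m1 m2 r hn d0 d1 d2 hd0 hd1 hd2
  have hcard_off : (((univ : Finset (Fin n1)).offDiag.card : ℕ) : ℝ) = (n1:ℝ) ^ 2 - n1 := by
    rw [Finset.offDiag_card, Finset.card_univ, Fintype.card_fin]
    have hle : n1 ≤ n1 * n1 := Nat.le_mul_of_pos_left n1 (by omega)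
    push_cast [Nat.cast_sub hle]
    ring
  have hcard_cr : (((univ : Finset (Fin n × Fin n1)).card : ℕ) : ℝ) = (n:ℝ) * n1 := by
    rw [Finset.card_univ, Fintype.card_prod, Fintype.card_fin, Fintype.card_fin]
    push_cast
    ring
  have hS1sum : (∑ p ∈ (univ : Finset (Fin n1)).offDiag,
      (aa * ((Fcnt m1 (rowF n1 (m1+m2) r d1 d2 p.1) (rowF n1 (m1+m2) r d1 d2 p.2) : ℕ) : ℝ)
        + bb * ((Hcnt m1 (rowF n1 (m1+m2) r d1 d2 p.1) (rowF n1 (m1+m2) r d1 d2 p.2) : ℕ) : ℝ)))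
      = (((univ : Finset (Fin n1)).offDiag.card : ℕ) : ℝ) * phi1 n1 m1 m2 r := by
    rw [Finset.sum_add_distrib, ← Finset.mul_sum, ← Finset.mul_sum,
      sum_Fcnt_offDiag n1 m1 m2 r d1 d2 hd1, sum_Hcnt_offDiag n1 m1 m2 r d1 d2 hd1 hd2,
      hcard_off]
    unfold phi1
    field_simp
    ring
  have hB1 : (n1:ℝ) * ((n1:ℝ) - 1) * Real.exp (phi1 n1 m1 m2 r) ≤ S1v n1 m1 m2 r d1 d2 := by
    unfold S1v
    rw [Finset.sum_congr rfl fun p _ => pow_FH_exp _ _]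
    have h := sum_exp_chord _ _ _ hS1sum
    rw [hcard_off] at h
    calc (n1:ℝ) * ((n1:ℝ) - 1) * Real.exp (phi1 n1 m1 m2 r)
        = ((n1:ℝ) ^ 2 - n1) * Real.exp (phi1 n1 m1 m2 r) := by ring
      _ ≤ _ := h
  have hS2sum : (∑ p ∈ (univ : Finset (Fin n × Fin n1)),
      (aa * ((Fcnt m1 (rowI n (m1+m2) r d0 p.1) (rowF n1 (m1+m2) r d1 d2 p.2) : ℕ) : ℝ)
        + bb * ((Hcnt m1 (rowI n (m1+m2) r d0 p.1) (rowF n1 (m1+m2) r d1 d2 p.2) : ℕ) : ℝ)))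
      = (((univ : Finset (Fin n × Fin n1)).card : ℕ) : ℝ) * phi2 m1 m2 := by
    rw [Fintype.sum_prod_type]
    have hinner : ∀ i : Fin n, (∑ j : Fin n1,
        (aa * ((Fcnt m1 (rowI n (m1+m2) r d0 i) (rowF n1 (m1+m2) r d1 d2 j) : ℕ) : ℝ)
          + bb * ((Hcnt m1 (rowI n (m1+m2) r d0 i) (rowF n1 (m1+m2) r d1 d2 j) : ℕ) : ℝ)))
        = aa * (∑ j : Fin n1,
            ((Fcnt m1 (rowI n (m1+m2) r d0 i) (rowF n1 (m1+m2) r d1 d2 j) : ℕ) : ℝ))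
          + bb * (∑ j : Fin n1,
            ((Hcnt m1 (rowI n (m1+m2) r d0 i) (rowF n1 (m1+m2) r d1 d2 j) : ℕ) : ℝ)) := by
      intro i
      rw [Finset.sum_add_distrib, ← Finset.mul_sum, ← Finset.mul_sum]
    rw [Finset.sum_congr rfl fun i _ => hinner i, Finset.sum_add_distrib,
      ← Finset.mul_sum, ← Finset.mul_sum,
      sum_Fcnt_cross n n1 m1 m2 r d0 d1 d2 hd0 hd1,
      sum_Hcnt_cross n n1 m1 m2 r d0 d1 d2 hd0 hd1 hd2, hcard_cr]
    unfold phi2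
    ring
  have hB2 : (n:ℝ) * n1 * Real.exp (phi2 m1 m2) ≤ S2v n n1 m1 m2 r d0 d1 d2 := by
    unfold S2v
    rw [Finset.sum_congr rfl fun i _ => Finset.sum_congr rfl fun j _ => pow_FH_exp _ _]
    have h := sum_exp_chord _ _ _ hS2sum
    rw [hcard_cr, Fintype.sum_prod_type] at h
    exact h
  refine ⟨?_, ?_, ?_⟩
  · -- part (i)
    have hLB1 : LBW3 n n1 m1 m2 r (WD (fun k : Fin (m1 + m2) => qfun m1 m2 0 (k : ℕ)) d0)
        = -((4:ℝ)/3) ^ (m1 + m2 + r) + (1 / ((n:ℝ) + n1) ^ 2) *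
          ((3/2:ℝ) ^ r * (n:ℝ) ^ 2 *
              (WD (fun k : Fin (m1 + m2) => qfun m1 m2 0 (k : ℕ)) d0 + (4/3:ℝ) ^ (m1 + m2))
            + (n1:ℝ) * (3/2:ℝ) ^ (m1 + m2 + r)
            + (5/4:ℝ) ^ m1 * (23/18:ℝ) ^ (m2 + r) *
                ((n1:ℝ) * ((n1:ℝ) - 1) * Real.exp (phi1 n1 m1 m2 r))
            + 2 * ((5/4:ℝ) ^ m1 * (23/18:ℝ) ^ (m2 + r) *
                ((n:ℝ) * n1 * Real.exp (phi2 m1 m2)))) := by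
      unfold LBW3 Cconst T1c T2c
      ring
    have hLB1b : LBW3b1 n n1 m1 m2 r (WD (fun k : Fin (m1 + m2) => qfun m1 m2 0 (k : ℕ)) d0)
        = -((4:ℝ)/3) ^ (m1 + m2 + r + 1) + (1 / ((n:ℝ) + n1) ^ 2) *
          ((3/2:ℝ) * ((3/2:ℝ) ^ r * (n:ℝ) ^ 2 *
              (WD (fun k : Fin (m1 + m2) => qfun m1 m2 0 (k : ℕ)) d0 + (4/3:ℝ) ^ (m1 + m2)))
            + (3/2:ℝ) * ((n1:ℝ) * (3/2:ℝ) ^ (m1 + m2 + r))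
            + (3/2:ℝ) * ((5/4:ℝ) ^ m1 * (23/18:ℝ) ^ (m2 + r) *
                ((n1:ℝ) * ((n1:ℝ) - 1) * Real.exp (phi1 n1 m1 m2 r)))
            + (5/2:ℝ) * ((5/4:ℝ) ^ m1 * (23/18:ℝ) ^ (m2 + r) *
                ((n:ℝ) * n1 * Real.exp (phi2 m1 m2)))) := by
      unfold LBW3b1 Cconst T1c T2c
      ring
    exact assemble (((n:ℝ) + n1) ^ 2) ((5/4:ℝ) ^ m1 * (23/18:ℝ) ^ (m2 + r)) _ _ _ _
      (S1v n1 m1 m2 r d1 d2) (S2v n n1 m1 m2 r d0 d1 d2) _ _ hN2 hP hB1 hB2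
      (by rw [hID3, hLB1]; ring) (by rw [hIDb, hLB1b]; ring)
  · -- part (ii)
    intro hm2
    subst hm2
    have hphi : phi1p n1 (m1 + 0) r = phi1 n1 m1 0 r := by
      unfold phi1p phi1
      push_cast
      ring
    have hH0 : ∀ (i : Fin n) (j : Fin n1),
        Hcnt m1 (rowI n (m1 + 0) r d0 i) (rowF n1 (m1 + 0) r d1 d2 j) = 0 := by
      intro i j
      unfold Hcnt
      refine Finset.sum_eq_zero fun k _ => if_neg fun h => ?_
      have h1 := h.1
      have hge : ¬ ((k : ℕ) < m1 + 0) := by omega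
      have h2 := h.2
      rw [rowI_ge _ _ _ hge] at h2
      rcases rowF_mem d1 hd2 j k hge with hv | hv <;> omega
    have hterm2 : ∀ (i : Fin n) (j : Fin n1),
        (6/5:ℝ) ^ Fcnt m1 (rowI n (m1 + 0) r d0 i) (rowF n1 (m1 + 0) r d1 d2 j) *
          (27/23:ℝ) ^ Hcnt m1 (rowI n (m1 + 0) r d0 i) (rowF n1 (m1 + 0) r d1 d2 j)
        = (6/5:ℝ) ^ Fcnt m1 (rowI n (m1 + 0) r d0 i) (rowF n1 (m1 + 0) r d1 d2 j) := by
      intro i j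
      rw [hH0 i j, pow_zero, mul_one]
    have hS2F : (∑ p ∈ (univ : Finset (Fin n × Fin n1)),
        ((Fcnt m1 (rowI n (m1 + 0) r d0 p.1) (rowF n1 (m1 + 0) r d1 d2 p.2) : ℕ) : ℝ))
        = m1 * ((n:ℝ) * n1 / 2) := by
      rw [Fintype.sum_prod_type]
      exact sum_Fcnt_cross n n1 m1 0 r d0 d1 d2 hd0 hd1
    have hB2' : p1c n n1 (m1 + 0) * (6/5:ℝ) ^ (w1 (m1 + 0))
        + q1c n n1 (m1 + 0) * (6/5:ℝ) ^ (w1 (m1 + 0) + 1) ≤ S2v n n1 m1 0 r d0 d1 d2 := by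
      unfold S2v
      rw [Finset.sum_congr rfl fun i _ => Finset.sum_congr rfl fun j _ => hterm2 i j]
      have h := sum_chord (univ : Finset (Fin n × Fin n1))
        (fun p => Fcnt m1 (rowI n (m1 + 0) r d0 p.1) (rowF n1 (m1 + 0) r d1 d2 p.2))
        (6/5) (by norm_num) (w1 (m1 + 0))
      rw [hS2F, hcard_cr, Fintype.sum_prod_type] at h
      refine le_trans (le_of_eq ?_) h
      unfold p1c q1c
      push_cast
      ring
    have hLB2 : LBW32 n n1 (m1 + 0) r (WD (fun k : Fin (m1 + 0) => qfun m1 0 0 (k : ℕ)) d0)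
        = -((4:ℝ)/3) ^ (m1 + 0 + r) + (1 / ((n:ℝ) + n1) ^ 2) *
          ((3/2:ℝ) ^ r * (n:ℝ) ^ 2 *
              (WD (fun k : Fin (m1 + 0) => qfun m1 0 0 (k : ℕ)) d0 + (4/3:ℝ) ^ (m1 + 0))
            + (n1:ℝ) * (3/2:ℝ) ^ (m1 + 0 + r)
            + (5/4:ℝ) ^ m1 * (23/18:ℝ) ^ (0 + r) *
                ((n1:ℝ) * ((n1:ℝ) - 1) * Real.exp (phi1 n1 m1 0 r))
            + 2 * ((5/4:ℝ) ^ m1 * (23/18:ℝ) ^ (0 + r) *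
                (p1c n n1 (m1 + 0) * (6/5:ℝ) ^ (w1 (m1 + 0))
                  + q1c n n1 (m1 + 0) * (6/5:ℝ) ^ (w1 (m1 + 0) + 1)))) := by
      unfold LBW32 Cconst T1pc
      rw [hphi]
      ring
    have hLB2b : LBW3b2 n n1 (m1 + 0) r (WD (fun k : Fin (m1 + 0) => qfun m1 0 0 (k : ℕ)) d0)
        = -((4:ℝ)/3) ^ (m1 + 0 + r + 1) + (1 / ((n:ℝ) + n1) ^ 2) *
          ((3/2:ℝ) * ((3/2:ℝ) ^ r * (n:ℝ) ^ 2 *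
              (WD (fun k : Fin (m1 + 0) => qfun m1 0 0 (k : ℕ)) d0 + (4/3:ℝ) ^ (m1 + 0)))
            + (3/2:ℝ) * ((n1:ℝ) * (3/2:ℝ) ^ (m1 + 0 + r))
            + (3/2:ℝ) * ((5/4:ℝ) ^ m1 * (23/18:ℝ) ^ (0 + r) *
                ((n1:ℝ) * ((n1:ℝ) - 1) * Real.exp (phi1 n1 m1 0 r)))
            + (5/2:ℝ) * ((5/4:ℝ) ^ m1 * (23/18:ℝ) ^ (0 + r) *
                (p1c n n1 (m1 + 0) * (6/5:ℝ) ^ (w1 (m1 + 0))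
                  + q1c n n1 (m1 + 0) * (6/5:ℝ) ^ (w1 (m1 + 0) + 1)))) := by
      unfold LBW3b2 Cconst T1pc
      rw [hphi]
      ring
    exact assemble (((n:ℝ) + n1) ^ 2) ((5/4:ℝ) ^ m1 * (23/18:ℝ) ^ (0 + r)) _ _ _ _
      (S1v n1 m1 0 r d1 d2) (S2v n n1 m1 0 r d0 d1 d2) _ _ hN2 hP hB1 hB2'
      (by rw [hID3, hLB2]; ring) (by rw [hIDb, hLB2b]; ring)
  · -- part (iii)
    intro hm1
    subst hm1
    have hn13 : 3 ≤ n1 := by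
      have h := IsUType_card3 hd1 (⟨0, by omega⟩ : Fin (0 + m2)) (Nat.not_lt_zero _)
        (v := 0) (by norm_num)
      omega
    have hn13R : (3:ℝ) ≤ n1 := by exact_mod_cast hn13
    have hw2nn : 0 ≤ w2 n1 (0 + m2) r := by
      unfold w2
      apply Int.floor_nonneg.mpr
      have e2 : (0:ℝ) < 3 * ((n1:ℝ) - 1) := by linarith
      have e3 : (0:ℝ) < 2 * ((n1:ℝ) - 1) := by linarith
      have e4 : (0:ℝ) ≤ ((0 + m2 : ℕ) : ℝ) * ((n1:ℝ) - 3) :=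
        mul_nonneg (Nat.cast_nonneg _) (by linarith)
      have e5 : (0:ℝ) ≤ (r:ℝ) * ((n1:ℝ) - 2) :=
        mul_nonneg (Nat.cast_nonneg _) (by linarith)
      exact add_nonneg (div_nonneg e4 e2.le) (div_nonneg e5 e3.le)
    have hw2eq : w2 n1 (0 + m2) r = (((w2 n1 (0 + m2) r).toNat : ℕ) : ℤ) :=
      (Int.toNat_of_nonneg hw2nn).symm
    set w2n := (w2 n1 (0 + m2) r).toNat with hw2n_def
    have hw2r : ((w2 n1 (0 + m2) r : ℤ) : ℝ) = (w2n : ℝ) := by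
      rw [hw2eq]
      push_cast
      rfl
    have hz1 : (27/23:ℝ) ^ (w2 n1 (0 + m2) r) = (27/23:ℝ) ^ w2n := by
      rw [hw2eq, zpow_natCast]
    have hz2 : (27/23:ℝ) ^ (w2 n1 (0 + m2) r + 1) = (27/23:ℝ) ^ (w2n + 1) := by
      rw [hw2eq, show (((w2n : ℕ) : ℤ) + 1) = (((w2n + 1 : ℕ) : ℕ) : ℤ) by push_cast; ring,
        zpow_natCast]
    have hterm1 : ∀ p ∈ (univ : Finset (Fin n1)).offDiag,
        (6/5:ℝ) ^ Fcnt 0 (rowF n1 (0 + m2) r d1 d2 p.1) (rowF n1 (0 + m2) r d1 d2 p.2) *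
          (27/23:ℝ) ^ Hcnt 0 (rowF n1 (0 + m2) r d1 d2 p.1) (rowF n1 (0 + m2) r d1 d2 p.2)
        = (27/23:ℝ) ^ Hcnt 0 (rowF n1 (0 + m2) r d1 d2 p.1) (rowF n1 (0 + m2) r d1 d2 p.2) := by
      intro p _
      rw [Fcnt_zero, pow_zero, one_mul]
    have hS1H := sum_Hcnt_offDiag n1 0 m2 r d1 d2 hd1 hd2
    have hB1' : p2c n1 (0 + m2) r * (27/23:ℝ) ^ (w2 n1 (0 + m2) r)
        + q2c n1 (0 + m2) r * (27/23:ℝ) ^ (w2 n1 (0 + m2) r + 1)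
        ≤ S1v n1 0 m2 r d1 d2 := by
      rw [hz1, hz2]
      unfold S1v
      rw [Finset.sum_congr rfl hterm1]
      have h := sum_chord ((univ : Finset (Fin n1)).offDiag)
        (fun p => Hcnt 0 (rowF n1 (0 + m2) r d1 d2 p.1) (rowF n1 (0 + m2) r d1 d2 p.2))
        (27/23) (by norm_num) w2n
      rw [hS1H, hcard_off] at h
      refine le_trans (le_of_eq ?_) h
      unfold p2c q2c
      rw [hw2r]
      push_cast
      ring
    have hterm2 : ∀ (i : Fin n) (j : Fin n1),
        (6/5:ℝ) ^ Fcnt 0 (rowI n (0 + m2) r d0 i) (rowF n1 (0 + m2) r d1 d2 j) *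
          (27/23:ℝ) ^ Hcnt 0 (rowI n (0 + m2) r d0 i) (rowF n1 (0 + m2) r d1 d2 j)
        = (27/23:ℝ) ^ Hcnt 0 (rowI n (0 + m2) r d0 i) (rowF n1 (0 + m2) r d1 d2 j) := by
      intro i j
      rw [Fcnt_zero, pow_zero, one_mul]
    have hS2H : (∑ p ∈ (univ : Finset (Fin n × Fin n1)),
        ((Hcnt 0 (rowI n (0 + m2) r d0 p.1) (rowF n1 (0 + m2) r d1 d2 p.2) : ℕ) : ℝ))
        = m2 * ((n:ℝ) * n1 / 3) := by
      rw [Fintype.sum_prod_type]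
      exact sum_Hcnt_cross n n1 0 m2 r d0 d1 d2 hd0 hd1 hd2
    have hB2' : p3c n n1 (0 + m2) * (27/23:ℝ) ^ (w3 (0 + m2))
        + q3c n n1 (0 + m2) * (27/23:ℝ) ^ (w3 (0 + m2) + 1)
        ≤ S2v n n1 0 m2 r d0 d1 d2 := by
      unfold S2v
      rw [Finset.sum_congr rfl fun i _ => Finset.sum_congr rfl fun j _ => hterm2 i j]
      have h := sum_chord (univ : Finset (Fin n × Fin n1))
        (fun p => Hcnt 0 (rowI n (0 + m2) r d0 p.1) (rowF n1 (0 + m2) r d1 d2 p.2))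
        (27/23) (by norm_num) (w3 (0 + m2))
      rw [hS2H, hcard_cr, Fintype.sum_prod_type] at h
      refine le_trans (le_of_eq ?_) h
      unfold p3c q3c
      push_cast
      ring
    have hLB3 : LBW33 n n1 (0 + m2) r (WD (fun k : Fin (0 + m2) => qfun 0 m2 0 (k : ℕ)) d0)
        = -((4:ℝ)/3) ^ (0 + m2 + r) + (1 / ((n:ℝ) + n1) ^ 2) *
          ((3/2:ℝ) ^ r * (n:ℝ) ^ 2 *
              (WD (fun k : Fin (0 + m2) => qfun 0 m2 0 (k : ℕ)) d0 + (4/3:ℝ) ^ (0 + m2))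
            + (n1:ℝ) * (3/2:ℝ) ^ (0 + m2 + r)
            + (5/4:ℝ) ^ 0 * (23/18:ℝ) ^ (m2 + r) *
                (p2c n1 (0 + m2) r * (27/23:ℝ) ^ (w2 n1 (0 + m2) r)
                  + q2c n1 (0 + m2) r * (27/23:ℝ) ^ (w2 n1 (0 + m2) r + 1))
            + 2 * ((5/4:ℝ) ^ 0 * (23/18:ℝ) ^ (m2 + r) *
                (p3c n n1 (0 + m2) * (27/23:ℝ) ^ (w3 (0 + m2))
                  + q3c n n1 (0 + m2) * (27/23:ℝ) ^ (w3 (0 + m2) + 1)))) := by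
      unfold LBW33 Cconst
      rw [hz1, hz2]
      ring
    have hLB3b : LBW3b3 n n1 (0 + m2) r (WD (fun k : Fin (0 + m2) => qfun 0 m2 0 (k : ℕ)) d0)
        = -((4:ℝ)/3) ^ (0 + m2 + r + 1) + (1 / ((n:ℝ) + n1) ^ 2) *
          ((3/2:ℝ) * ((3/2:ℝ) ^ r * (n:ℝ) ^ 2 *
              (WD (fun k : Fin (0 + m2) => qfun 0 m2 0 (k : ℕ)) d0 + (4/3:ℝ) ^ (0 + m2)))
            + (3/2:ℝ) * ((n1:ℝ) * (3/2:ℝ) ^ (0 + m2 + r))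
            + (3/2:ℝ) * ((5/4:ℝ) ^ 0 * (23/18:ℝ) ^ (m2 + r) *
                (p2c n1 (0 + m2) r * (27/23:ℝ) ^ (w2 n1 (0 + m2) r)
                  + q2c n1 (0 + m2) r * (27/23:ℝ) ^ (w2 n1 (0 + m2) r + 1)))
            + (5/2:ℝ) * ((5/4:ℝ) ^ 0 * (23/18:ℝ) ^ (m2 + r) *
                (p3c n n1 (0 + m2) * (27/23:ℝ) ^ (w3 (0 + m2))
                  + q3c n n1 (0 + m2) * (27/23:ℝ) ^ (w3 (0 + m2) + 1)))) := by
      unfold LBW3b3 Cconst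
      rw [hz1, hz2]
      ring
    exact assemble (((n:ℝ) + n1) ^ 2) ((5/4:ℝ) ^ 0 * (23/18:ℝ) ^ (m2 + r)) _ _ _ _
      (S1v n1 0 m2 r d1 d2) (S2v n n1 0 m2 r d0 d1 d2) _ _ hN2 hP hB1' hB2'
      (by rw [hID3, hLB3]; ring) (by rw [hIDb, hLB3b]; ring)

end CAUD

end
end

section
/- Let l ≥ 2, m1, m2 ≥ 0 with m = m1+m2 ≥ 1, and let d_0 ∈ U(n_0; 2^{m1} 3^{m2}), …, d_{l−1} ∈ U(n_{l−1}; 2^{m1} 3^{m2}) with n_{l−1} ≥ 2. For 1 ≤ j ≤ l let D^{(j)} denote the (n_0+…+n_{j−1})×(m1+m2) design obtained by stacking d_0,…,d_{j−1}, and set N_{l−1} = n_0+…+n_{l−2}. Then WD(D^{(l)}) ≥ −((n_{l−1}² + 2·N_{l−1}·n_{l−1})/(N_{l−1}+n_{l−1})²)·(4/3)^m + (n_{l−1}/(N_{l−1}+n_{l−1})²)·(3/2)^m + (N_{l−1}²/(N_{l−1}+n_{l−1})²)·WD(D^{(l−1)}) + (1/(N_{l−1}+n_{l−1})²)·(5/4)^{m1}·(23/18)^{m2}·(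 T_{l+2} + 2·T_{l+1} ), where a = ln(6/5), b = ln(27/23), T_{l+1} = N_{l−1}·n_{l−1}·e^{a·m1/2 + b·m2/3} and T_{l+2} = n_{l−1}(n_{l−1}−1)·e^{a·m1·(n_{l−1}−2)/(2(n_{l−1}−1)) + b·m2·(n_{l−1}−3)/(3(n_{l−1}−1))}. -/
open Finset

noncomputable section

namespace CAUD

/-! ### Auxiliary lemmas for `paper_stmt_13` -/

def Fc (m1 : ℕ) {M : ℕ} (x y : Fin M → ℕ) : ℕ :=
  (univ.filter fun k : Fin M => (k : ℕ) < m1 ∧ x k = y k).card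

def Vc (m1 : ℕ) {M : ℕ} (x y : Fin M → ℕ) : ℕ :=
  (univ.filter fun k : Fin M => ¬ (k : ℕ) < m1 ∧ x k = y k).card

def Pfun (m1 m2 : ℕ) (x y : Fin (m1 + m2) → ℕ) : ℝ :=
  ∏ k : Fin (m1 + m2),
    ((3 : ℝ) / 2 - |uVal (qfun m1 m2 0 (k : ℕ)) (x k) - uVal (qfun m1 m2 0 (k : ℕ)) (y k)| *
      (1 - |uVal (qfun m1 m2 0 (k : ℕ)) (x k) - uVal (qfun m1 m2 0 (k : ℕ)) (y k)|))

lemma abs_eval {x c : ℝ} (h : x = c ∨ x = -c) (hc : 0 ≤ c) : |x| = c := by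
  rcases h with rfl | rfl
  · exact abs_of_nonneg hc
  · simp [abs_neg, abs_of_nonneg hc]

lemma factor2 (u v : ℕ) (hu : u < 2) (hv : v < 2) :
    (3:ℝ)/2 - |uVal 2 u - uVal 2 v| * (1 - |uVal 2 u - uVal 2 v|)
      = 5/4 * (6/5) ^ (if u = v then 1 else 0 : ℕ) := by
  interval_cases u <;> interval_cases v <;> simp [uVal] <;> norm_num [abs_div]

lemma factor3 (u v : ℕ) (hu : u < 3) (hv : v < 3) :
    (3:ℝ)/2 - |uVal 3 u - uVal 3 v| * (1 - |uVal 3 u - uVal 3 v|)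
      = 23/18 * (27/23) ^ (if u = v then 1 else 0 : ℕ) := by
  interval_cases u <;> interval_cases v <;> simp [uVal] <;> norm_num [abs_div]

lemma card_filter_lt (m1 m2 : ℕ) :
    (univ.filter fun k : Fin (m1 + m2) => (k : ℕ) < m1).card = m1 := by
  have h : (Finset.range (m1 + m2)).filter (fun i => i < m1) = Finset.range m1 := by
    ext i; simp; omega
  rw [Finset.card_filter, Fin.sum_univ_eq_sum_range (fun i => if i < m1 then 1 else 0),
    ← Finset.card_filter, h, Finset.card_range]

lemma card_filter_not_lt (m1 m2 : ℕ) :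
    (univ.filter fun k : Fin (m1 + m2) => ¬ (k : ℕ) < m1).card = m2 := by
  have h : (Finset.range (m1 + m2)).filter (fun i => ¬ i < m1) = Finset.Ico m1 (m1 + m2) := by
    ext i; simp; omega
  rw [Finset.card_filter, Fin.sum_univ_eq_sum_range (fun i => if ¬ i < m1 then 1 else 0),
    ← Finset.card_filter, h, Nat.card_Ico]
  omega

lemma Fc_self (m1 m2 : ℕ) (x : Fin (m1 + m2) → ℕ) : Fc m1 x x = m1 := by
  unfold Fc; simp only [and_true]; exact card_filter_lt m1 m2

lemma Vc_self (m1 m2 : ℕ) (x : Fin (m1 + m2) → ℕ) : Vc m1 x x = m2 := by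
  unfold Vc; simp only [and_true]; exact card_filter_not_lt m1 m2

lemma g_eq (m1 m2 : ℕ) (x y : Fin (m1 + m2) → ℕ)
    (hx : ∀ k : Fin (m1 + m2), x k < if (k : ℕ) < m1 then 2 else 3)
    (hy : ∀ k : Fin (m1 + m2), y k < if (k : ℕ) < m1 then 2 else 3) :
    Pfun m1 m2 x y
    = (5/4 : ℝ) ^ m1 * (23/18 : ℝ) ^ m2 * (6/5 : ℝ) ^ (Fc m1 x y) * (27/23 : ℝ) ^ (Vc m1 x y) := by
  have key : ∀ k : Fin (m1 + m2),
      ((3 : ℝ) / 2 - |uVal (qfun m1 m2 0 (k : ℕ)) (x k) - uVal (qfun m1 m2 0 (k : ℕ)) (y k)| *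
        (1 - |uVal (qfun m1 m2 0 (k : ℕ)) (x k) - uVal (qfun m1 m2 0 (k : ℕ)) (y k)|))
      = if (k : ℕ) < m1 then (5/4 : ℝ) * (6/5) ^ (if x k = y k then 1 else 0 : ℕ)
        else (23/18 : ℝ) * (27/23) ^ (if x k = y k then 1 else 0 : ℕ) := by
    intro k
    by_cases hk : (k : ℕ) < m1
    · have hq : qfun m1 m2 0 (k : ℕ) = 2 := by simp [qfun, hk]
      rw [hq, if_pos hk]
      exact factor2 _ _ (by simpa [hk] using hx k) (by simpa [hk] using hy k)
    · have hq : qfun m1 m2 0 (k : ℕ) = 3 := by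
        have := k.isLt; simp only [qfun, if_neg hk]; rw [if_pos (by omega)]
      rw [hq, if_neg hk]
      exact factor3 _ _ (by simpa [hk] using hx k) (by simpa [hk] using hy k)
  rw [Pfun, Finset.prod_congr rfl (fun k _ => key k), Finset.prod_ite]
  rw [Finset.prod_mul_distrib, Finset.prod_mul_distrib, Finset.prod_const, Finset.prod_const,
    Finset.prod_pow_eq_pow_sum, Finset.prod_pow_eq_pow_sum, card_filter_lt, card_filter_not_lt]
  have hF : ∑ k ∈ univ.filter (fun k : Fin (m1+m2) => (k:ℕ) < m1),
      (if x k = y k then 1 else 0 : ℕ) = Fc m1 x y := by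
    rw [← Finset.card_filter, Finset.filter_filter]; rfl
  have hV : ∑ k ∈ univ.filter (fun k : Fin (m1+m2) => ¬ (k:ℕ) < m1),
      (if x k = y k then 1 else 0 : ℕ) = Vc m1 x y := by
    rw [← Finset.card_filter, Finset.filter_filter]; rfl
  rw [hF, hV]; ring

lemma exp_pow (F V : ℕ) :
    (6/5 : ℝ) ^ F * (27/23 : ℝ) ^ V = Real.exp (aa * F + bb * V) := by
  rw [Real.exp_add, mul_comm aa (F:ℝ), mul_comm bb (V:ℝ), Real.exp_nat_mul, Real.exp_nat_mul,
    aa, bb, Real.exp_log (by norm_num), Real.exp_log (by norm_num)]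

lemma Pexp (m1 m2 : ℕ) (x y : Fin (m1 + m2) → ℕ)
    (hx : ∀ k : Fin (m1 + m2), x k < if (k : ℕ) < m1 then 2 else 3)
    (hy : ∀ k : Fin (m1 + m2), y k < if (k : ℕ) < m1 then 2 else 3) :
    Pfun m1 m2 x y
    = (5/4 : ℝ) ^ m1 * (23/18 : ℝ) ^ m2 * Real.exp (aa * Fc m1 x y + bb * Vc m1 x y) := by
  rw [g_eq m1 m2 x y hx hy, mul_assoc, exp_pow]

lemma Pdiag (m1 m2 : ℕ) (x : Fin (m1 + m2) → ℕ) :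
    Pfun m1 m2 x x = ((3:ℝ)/2) ^ (m1 + m2) := by
  rw [Pfun]
  rw [Finset.prod_congr rfl (fun k _ => by rw [sub_self, abs_zero, zero_mul, sub_zero])]
  rw [Finset.prod_const, Finset.card_univ, Fintype.card_fin]

lemma Psymm (m1 m2 : ℕ) (x y : Fin (m1 + m2) → ℕ) :
    Pfun m1 m2 x y = Pfun m1 m2 y x := by
  refine Finset.prod_congr rfl fun k _ => by rw [abs_sub_comm]

lemma jensen_exp {ι : Type*} (s : Finset ι) (f : ι → ℝ) :
    (s.card : ℝ) * Real.exp ((∑ i ∈ s, f i) / s.card) ≤ ∑ i ∈ s, Real.exp (f i) := by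
  rcases s.eq_empty_or_nonempty with rfl | hs
  · simp
  · have hc : (0:ℝ) < s.card := by exact_mod_cast Finset.card_pos.2 hs
    have h := convexOn_exp.map_sum_le (t := s) (w := fun _ => (s.card : ℝ)⁻¹)
      (p := f) (fun i _ => by positivity) (by simp [mul_inv_cancel₀ hc.ne'])
      (fun i _ => Set.mem_univ _)
    simp only [smul_eq_mul] at h
    rw [← Finset.mul_sum] at h
    have h2 : Real.exp ((s.card:ℝ)⁻¹ * ∑ i ∈ s, f i)
        ≤ (s.card:ℝ)⁻¹ * ∑ i ∈ s, Real.exp (f i) := by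
      simpa [Finset.mul_sum] using h
    calc (s.card : ℝ) * Real.exp ((∑ i ∈ s, f i) / s.card)
        = (s.card : ℝ) * Real.exp ((s.card:ℝ)⁻¹ * ∑ i ∈ s, f i) := by rw [div_eq_inv_mul]
      _ ≤ (s.card : ℝ) * ((s.card:ℝ)⁻¹ * ∑ i ∈ s, Real.exp (f i)) :=
          mul_le_mul_of_nonneg_left h2 hc.le
      _ = ∑ i ∈ s, Real.exp (f i) := by field_simp

lemma col_count {A B q : ℕ} (c : Fin A → ℕ) (c' : Fin B → ℕ) (hc : ∀ i, c i < q)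
    (hbal : ∀ v < q, q * (univ.filter fun j => c' j = v).card = B) :
    q * (∑ i : Fin A, ∑ j : Fin B, if c i = c' j then 1 else 0) = A * B := by
  have hrow : ∀ i : Fin A, q * ∑ j : Fin B, (if c i = c' j then 1 else 0) = B := by
    intro i
    have : ∑ j : Fin B, (if c i = c' j then 1 else 0)
        = (univ.filter fun j => c' j = c i).card := by
      rw [Finset.card_filter]
      exact Finset.sum_congr rfl fun j _ => by by_cases h : c i = c' j <;> simp [h, eq_comm]
    rw [this]; exact hbal _ (hc i)
  rw [Finset.mul_sum]
  rw [Finset.sum_congr rfl fun i _ => hrow i]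
  simp [Finset.card_univ, mul_comm]

lemma sumF {m1 m2 A B : ℕ} (x : Fin A → Fin (m1 + m2) → ℕ) (y : Fin B → Fin (m1 + m2) → ℕ)
    (hx : ∀ i k, (k : Fin (m1 + m2)) = k → (k : ℕ) < m1 → x i k < 2)
    (hbal : ∀ k : Fin (m1 + m2), (k : ℕ) < m1 →
      ∀ v < 2, 2 * (univ.filter fun j => y j k = v).card = B) :
    2 * ∑ i : Fin A, ∑ j : Fin B, Fc m1 (x i) (y j) = m1 * (A * B) := by
  have hswap : ∑ i : Fin A, ∑ j : Fin B, Fc m1 (x i) (y j)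
      = ∑ k : Fin (m1 + m2), ∑ i : Fin A, ∑ j : Fin B,
          (if (k : ℕ) < m1 ∧ x i k = y j k then 1 else 0) := by
    simp_rw [Fc, Finset.card_filter]
    exact (Finset.sum_congr rfl fun i _ => Finset.sum_comm
      (f := fun (j : Fin B) (k : Fin (m1 + m2)) =>
      if (k : ℕ) < m1 ∧ x i k = y j k then 1 else 0)).trans Finset.sum_comm
  rw [hswap, Finset.mul_sum]
  have hk : ∀ k : Fin (m1 + m2),
      2 * (∑ i : Fin A, ∑ j : Fin B, (if (k : ℕ) < m1 ∧ x i k = y j k then 1 else 0))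
      = if (k : ℕ) < m1 then A * B else 0 := by
    intro k
    by_cases hkm : (k : ℕ) < m1
    · rw [if_pos hkm]
      have : ∀ i j, (if (k : ℕ) < m1 ∧ x i k = y j k then 1 else 0)
          = (if x i k = y j k then 1 else 0) := by intro i j; simp [hkm]
      simp_rw [this]
      exact col_count (fun i => x i k) (fun j => y j k) (fun i => hx i k rfl hkm) (hbal k hkm)
    · simp [hkm]
  rw [Finset.sum_congr rfl fun k _ => hk k]
  rw [← Finset.sum_filter, Finset.sum_const, card_filter_lt m1 m2, smul_eq_mul]

lemma sumV {m1 m2 A B : ℕ} (x : Fin A → Fin (m1 + m2) → ℕ) (y : Fin B → Fin (m1 + m2) → ℕ)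
    (hx : ∀ i k, (k : Fin (m1 + m2)) = k → ¬ (k : ℕ) < m1 → x i k < 3)
    (hbal : ∀ k : Fin (m1 + m2), ¬ (k : ℕ) < m1 →
      ∀ v < 3, 3 * (univ.filter fun j => y j k = v).card = B) :
    3 * ∑ i : Fin A, ∑ j : Fin B, Vc m1 (x i) (y j) = m2 * (A * B) := by
  have hswap : ∑ i : Fin A, ∑ j : Fin B, Vc m1 (x i) (y j)
      = ∑ k : Fin (m1 + m2), ∑ i : Fin A, ∑ j : Fin B,
          (if ¬ (k : ℕ) < m1 ∧ x i k = y j k then 1 else 0) := by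
    simp_rw [Vc, Finset.card_filter]
    exact (Finset.sum_congr rfl fun i _ => Finset.sum_comm
      (f := fun (j : Fin B) (k : Fin (m1 + m2)) =>
      if ¬ (k : ℕ) < m1 ∧ x i k = y j k then 1 else 0)).trans Finset.sum_comm
  rw [hswap, Finset.mul_sum]
  have hk : ∀ k : Fin (m1 + m2),
      3 * (∑ i : Fin A, ∑ j : Fin B, (if ¬ (k : ℕ) < m1 ∧ x i k = y j k then 1 else 0))
      = if ¬ (k : ℕ) < m1 then A * B else 0 := by
    intro k
    by_cases hkm : ¬ (k : ℕ) < m1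
    · rw [if_pos hkm]
      have : ∀ i j, (if ¬ (k : ℕ) < m1 ∧ x i k = y j k then 1 else 0)
          = (if x i k = y j k then 1 else 0) := by intro i j; simp [hkm]
      simp_rw [this]
      exact col_count (fun i => x i k) (fun j => y j k) (fun i => hx i k rfl hkm) (hbal k hkm)
    · simp at hkm; simp [hkm]
  rw [Finset.sum_congr rfl fun k _ => hk k]
  rw [← Finset.sum_filter, Finset.sum_const, card_filter_not_lt m1 m2, smul_eq_mul]

lemma stack_lt (m1 m2 : ℕ) (ns : ℕ → ℕ) (d : (j : ℕ) → Fin (ns j) → Fin (m1 + m2) → ℕ)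
    (J : ℕ) (hU : ∀ j < J, IsUType (ns j) m1 m2 (d j))
    (i : Fin (∑ j ∈ Finset.range J, ns j)) (k : Fin (m1 + m2)) :
    stack (m1 + m2) ns d J i k < if (k : ℕ) < m1 then 2 else 3 := by
  induction J with
  | zero => exact absurd i.isLt (by simp)
  | succ J ih =>
    rw [stack]; dsimp only
    by_cases hi : ((Fin.cast (Finset.sum_range_succ ns J) i : Fin _) : ℕ)
        < ∑ j ∈ Finset.range J, ns j
    · rw [dif_pos hi]; exact ih (fun j hj => hU j (Nat.lt_succ_of_lt hj)) _
    · rw [dif_neg hi]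
      have h2 := hU J (Nat.lt_succ_self J) k
      by_cases hk : (k : ℕ) < m1
      · rw [if_pos hk] at h2 ⊢; exact h2.1 _
      · rw [if_neg hk] at h2 ⊢; exact h2.1 _

def rowE (M : ℕ) (ns : ℕ → ℕ) (d : (j : ℕ) → Fin (ns j) → Fin M → ℕ) (L : ℕ) :
    (Fin (∑ j ∈ Finset.range L, ns j) ⊕ Fin (ns L)) → Fin M → ℕ
  | Sum.inl i => stack M ns d L i
  | Sum.inr j => d L j

def EE (ns : ℕ → ℕ) (L : ℕ) :
    (Fin (∑ j ∈ Finset.range L, ns j) ⊕ Fin (ns L)) ≃ Fin (∑ j ∈ Finset.range (L+1), ns j) :=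
  finSumFinEquiv.trans (finCongr (Finset.sum_range_succ ns L).symm)

lemma stack_EE (M : ℕ) (ns : ℕ → ℕ) (d : (j : ℕ) → Fin (ns j) → Fin M → ℕ) (L : ℕ)
    (x : Fin (∑ j ∈ Finset.range L, ns j) ⊕ Fin (ns L)) :
    stack M ns d (L + 1) (EE ns L x) = rowE M ns d L x := by
  cases x with
  | inl i =>
    have hval : ((Fin.cast (Finset.sum_range_succ ns L) (EE ns L (Sum.inl i))) : ℕ) = (i : ℕ) := by
      simp [EE, finSumFinEquiv]
    rw [stack]; dsimp only
    rw [dif_pos (show ((Fin.cast (Finset.sum_range_succ ns L) (EE ns L (Sum.inl i))) : ℕ)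
      < ∑ j ∈ Finset.range L, ns j from by rw [hval]; exact i.isLt)]
    simp only [rowE]
    exact congrArg (stack M ns d L) (Fin.ext hval)
  | inr j =>
    have hval : ((Fin.cast (Finset.sum_range_succ ns L) (EE ns L (Sum.inr j))) : ℕ)
        = (∑ j ∈ Finset.range L, ns j) + (j : ℕ) := by
      simp [EE, finSumFinEquiv]
    rw [stack]; dsimp only
    rw [dif_neg (show ¬ ((Fin.cast (Finset.sum_range_succ ns L) (EE ns L (Sum.inr j))) : ℕ)
      < ∑ j ∈ Finset.range L, ns j from by rw [hval]; omega)]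
    simp only [rowE]
    exact congrArg (d L) (Fin.ext (by simp only [hval]; omega))

lemma bound_cross (m1 m2 : ℕ) {A B : ℕ} (x : Fin A → Fin (m1 + m2) → ℕ)
    (y : Fin B → Fin (m1 + m2) → ℕ)
    (hx : ∀ i (k : Fin (m1 + m2)), x i k < if (k : ℕ) < m1 then 2 else 3)
    (hy : ∀ j (k : Fin (m1 + m2)), y j k < if (k : ℕ) < m1 then 2 else 3)
    (hbal2 : ∀ k : Fin (m1 + m2), (k : ℕ) < m1 →
      ∀ v < 2, 2 * (univ.filter fun j => y j k = v).card = B)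
    (hbal3 : ∀ k : Fin (m1 + m2), ¬ (k : ℕ) < m1 →
      ∀ v < 3, 3 * (univ.filter fun j => y j k = v).card = B) :
    (5/4 : ℝ) ^ m1 * (23/18 : ℝ) ^ m2 * ((A : ℝ) * B) * Real.exp (phi2 m1 m2)
      ≤ ∑ i : Fin A, ∑ j : Fin B, Pfun m1 m2 (x i) (y j) := by
  have hx2 : ∀ i (k : Fin (m1 + m2)), (k : ℕ) < m1 → x i k < 2 := by
    intro i k hk; have := hx i k; rwa [if_pos hk] at this
  have hx3 : ∀ i (k : Fin (m1 + m2)), ¬ (k : ℕ) < m1 → x i k < 3 := by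
    intro i k hk; have := hx i k; rwa [if_neg hk] at this
  rcases Nat.eq_zero_or_pos A with rfl | hA
  · simp
  rcases Nat.eq_zero_or_pos B with rfl | hBpos
  · simp
  set f : Fin A × Fin B → ℝ :=
    fun p => aa * (Fc m1 (x p.1) (y p.2) : ℕ) + bb * (Vc m1 (x p.1) (y p.2) : ℕ) with hf
  have h1 : ∑ i : Fin A, ∑ j : Fin B, Pfun m1 m2 (x i) (y j)
      = (5/4 : ℝ) ^ m1 * (23/18 : ℝ) ^ m2 * ∑ p : Fin A × Fin B, Real.exp (f p) := by
    rw [Fintype.sum_prod_type, Finset.mul_sum]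
    refine Finset.sum_congr rfl fun i _ => ?_
    rw [Finset.mul_sum]
    exact Finset.sum_congr rfl fun j _ => Pexp m1 m2 _ _ (hx i) (hy j)
  have hsF := sumF x y (fun i k _ => hx2 i k) hbal2
  have hsV := sumV x y (fun i k _ => hx3 i k) hbal3
  have hcast : ∀ g : Fin A → Fin B → ℕ,
      ((∑ i : Fin A, ∑ j : Fin B, g i j : ℕ) : ℝ) = ∑ p : Fin A × Fin B, (g p.1 p.2 : ℝ) := by
    intro g; rw [Fintype.sum_prod_type]; push_cast; rfl
  have hFr : ∑ p : Fin A × Fin B, ((Fc m1 (x p.1) (y p.2) : ℕ) : ℝ) = m1 * (A * B) / 2 := by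
    rw [← hcast (fun i j => Fc m1 (x i) (y j))]
    have h2 : (2:ℝ) * ((∑ i : Fin A, ∑ j : Fin B, Fc m1 (x i) (y j) : ℕ) : ℝ)
        = (m1:ℝ) * ((A:ℝ) * B) := by exact_mod_cast hsF
    linarith
  have hVr : ∑ p : Fin A × Fin B, ((Vc m1 (x p.1) (y p.2) : ℕ) : ℝ) = m2 * (A * B) / 3 := by
    rw [← hcast (fun i j => Vc m1 (x i) (y j))]
    have h2 : (3:ℝ) * ((∑ i : Fin A, ∑ j : Fin B, Vc m1 (x i) (y j) : ℕ) : ℝ)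
        = (m2:ℝ) * ((A:ℝ) * B) := by exact_mod_cast hsV
    linarith
  have hsum_f : ∑ p : Fin A × Fin B, f p
      = aa * (m1 * (A * B) / 2) + bb * (m2 * (A * B) / 3) := by
    rw [hf]
    rw [Finset.sum_add_distrib, ← Finset.mul_sum, ← Finset.mul_sum, hFr, hVr]
  have hcard : ((univ : Finset (Fin A × Fin B)).card : ℝ) = (A : ℝ) * B := by
    simp [Finset.card_univ]
  have hABne : (A : ℝ) * B ≠ 0 := by positivity
  have harg : (∑ p : Fin A × Fin B, f p) / ((univ : Finset (Fin A × Fin B)).card : ℝ)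
      = phi2 m1 m2 := by
    rw [hsum_f, hcard, phi2]
    field_simp
  have hj := jensen_exp (univ : Finset (Fin A × Fin B)) f
  rw [harg, hcard] at hj
  rw [h1]
  have hC : (0:ℝ) ≤ (5/4 : ℝ) ^ m1 * (23/18 : ℝ) ^ m2 := by positivity
  calc (5/4 : ℝ) ^ m1 * (23/18 : ℝ) ^ m2 * ((A : ℝ) * B) * Real.exp (phi2 m1 m2)
      = (5/4 : ℝ) ^ m1 * (23/18 : ℝ) ^ m2 * ((A : ℝ) * B * Real.exp (phi2 m1 m2)) := by ring
    _ ≤ (5/4 : ℝ) ^ m1 * (23/18 : ℝ) ^ m2 * ∑ p : Fin A × Fin B, Real.exp (f p) :=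
        mul_le_mul_of_nonneg_left hj hC

lemma bound_within (m1 m2 : ℕ) {B : ℕ} (hB : 2 ≤ B) (y : Fin B → Fin (m1 + m2) → ℕ)
    (hy : ∀ j (k : Fin (m1 + m2)), y j k < if (k : ℕ) < m1 then 2 else 3)
    (hbal2 : ∀ k : Fin (m1 + m2), (k : ℕ) < m1 →
      ∀ v < 2, 2 * (univ.filter fun j => y j k = v).card = B)
    (hbal3 : ∀ k : Fin (m1 + m2), ¬ (k : ℕ) < m1 →
      ∀ v < 3, 3 * (univ.filter fun j => y j k = v).card = B) :
    (B : ℝ) * ((3:ℝ)/2) ^ (m1 + m2)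
      + (5/4 : ℝ) ^ m1 * (23/18 : ℝ) ^ m2 * ((B : ℝ) * ((B : ℝ) - 1)) *
          Real.exp (phi1 B m1 m2 0)
      ≤ ∑ i : Fin B, ∑ j : Fin B, Pfun m1 m2 (y i) (y j) := by
  have hy2 : ∀ i (k : Fin (m1 + m2)), (k : ℕ) < m1 → y i k < 2 := by
    intro i k hk; have := hy i k; rwa [if_pos hk] at this
  have hy3 : ∀ i (k : Fin (m1 + m2)), ¬ (k : ℕ) < m1 → y i k < 3 := by
    intro i k hk; have := hy i k; rwa [if_neg hk] at this
  set f : Fin B × Fin B → ℝ :=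
    fun p => aa * (Fc m1 (y p.1) (y p.2) : ℕ) + bb * (Vc m1 (y p.1) (y p.2) : ℕ) with hf
  -- split into diagonal and off-diagonal
  have hsplit : ∑ i : Fin B, ∑ j : Fin B, Pfun m1 m2 (y i) (y j)
      = (∑ p ∈ (univ : Finset (Fin B)).diag, Pfun m1 m2 (y p.1) (y p.2))
        + ∑ p ∈ (univ : Finset (Fin B)).offDiag, Pfun m1 m2 (y p.1) (y p.2) := by
    rw [← Finset.sum_product']
    rw [← Finset.diag_union_offDiag (univ : Finset (Fin B)),
      Finset.sum_union (Finset.disjoint_diag_offDiag _)]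
  have hdiag : ∑ p ∈ (univ : Finset (Fin B)).diag, Pfun m1 m2 (y p.1) (y p.2)
      = (B : ℝ) * ((3:ℝ)/2) ^ (m1 + m2) := by
    rw [Finset.sum_diag]
    rw [Finset.sum_congr rfl fun i _ => Pdiag m1 m2 (y i)]
    rw [Finset.sum_const, Finset.card_univ, Fintype.card_fin, nsmul_eq_mul]
  -- off-diagonal bound via Jensen
  have hcard : (((univ : Finset (Fin B)).offDiag.card : ℕ) : ℝ) = (B : ℝ) * B - B := by
    rw [Finset.offDiag_card, Finset.card_univ, Fintype.card_fin]
    have : B ≤ B * B := Nat.le_mul_of_pos_left B (by omega)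
    push_cast [this]
    ring
  have hBne : (B : ℝ) ≠ 0 := by positivity
  have hB1 : (B : ℝ) - 1 ≠ 0 := by
    have : (2 : ℝ) ≤ (B : ℝ) := by exact_mod_cast hB
    intro h; nlinarith
  -- sums of coincidence numbers over all ordered pairs
  have hsF := sumF y y (fun i k _ => hy2 i k) hbal2
  have hsV := sumV y y (fun i k _ => hy3 i k) hbal3
  have hcast : ∀ g : Fin B → Fin B → ℕ,
      ((∑ i : Fin B, ∑ j : Fin B, g i j : ℕ) : ℝ)
        = ∑ p ∈ (univ : Finset (Fin B)) ×ˢ (univ : Finset (Fin B)), (g p.1 p.2 : ℝ) := by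
    intro g
    rw [Finset.sum_product' (f := fun i j => ((g i j : ℕ) : ℝ))]
    push_cast; rfl
  have hsplitF : ∀ g : Fin B → Fin B → ℕ,
      ∑ p ∈ (univ : Finset (Fin B)) ×ˢ (univ : Finset (Fin B)), (g p.1 p.2 : ℝ)
      = (∑ p ∈ (univ : Finset (Fin B)).diag, (g p.1 p.2 : ℝ))
        + ∑ p ∈ (univ : Finset (Fin B)).offDiag, (g p.1 p.2 : ℝ) := by
    intro g
    rw [← Finset.diag_union_offDiag (univ : Finset (Fin B)),
      Finset.sum_union (Finset.disjoint_diag_offDiag _)]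
  have hFoff : ∑ p ∈ (univ : Finset (Fin B)).offDiag, ((Fc m1 (y p.1) (y p.2) : ℕ) : ℝ)
      = m1 * (B : ℝ) * B / 2 - B * m1 := by
    have hall : ((∑ i : Fin B, ∑ j : Fin B, Fc m1 (y i) (y j) : ℕ) : ℝ)
        = m1 * (B : ℝ) * B / 2 := by
      have h2 : (2:ℝ) * ((∑ i : Fin B, ∑ j : Fin B, Fc m1 (y i) (y j) : ℕ) : ℝ)
          = (m1:ℝ) * ((B:ℝ) * B) := by exact_mod_cast hsF
      linarith
    have hdiagF : ∑ p ∈ (univ : Finset (Fin B)).diag, ((Fc m1 (y p.1) (y p.2) : ℕ) : ℝ)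
        = (B : ℝ) * m1 := by
      rw [Finset.sum_diag]
      rw [Finset.sum_congr rfl fun i _ => by rw [Fc_self m1 m2 (y i)]]
      rw [Finset.sum_const, Finset.card_univ, Fintype.card_fin, nsmul_eq_mul]
    have := (hcast (fun i j => Fc m1 (y i) (y j))).symm.trans hall
    rw [hsplitF (fun i j => Fc m1 (y i) (y j)), hdiagF] at this
    linarith
  have hVoff : ∑ p ∈ (univ : Finset (Fin B)).offDiag, ((Vc m1 (y p.1) (y p.2) : ℕ) : ℝ)
      = m2 * (B : ℝ) * B / 3 - B * m2 := by
    have hall : ((∑ i : Fin B, ∑ j : Fin B, Vc m1 (y i) (y j) : ℕ) : ℝ)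
        = m2 * (B : ℝ) * B / 3 := by
      have h2 : (3:ℝ) * ((∑ i : Fin B, ∑ j : Fin B, Vc m1 (y i) (y j) : ℕ) : ℝ)
          = (m2:ℝ) * ((B:ℝ) * B) := by exact_mod_cast hsV
      linarith
    have hdiagV : ∑ p ∈ (univ : Finset (Fin B)).diag, ((Vc m1 (y p.1) (y p.2) : ℕ) : ℝ)
        = (B : ℝ) * m2 := by
      rw [Finset.sum_diag]
      rw [Finset.sum_congr rfl fun i _ => by rw [Vc_self m1 m2 (y i)]]
      rw [Finset.sum_const, Finset.card_univ, Fintype.card_fin, nsmul_eq_mul]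
    have := (hcast (fun i j => Vc m1 (y i) (y j))).symm.trans hall
    rw [hsplitF (fun i j => Vc m1 (y i) (y j)), hdiagV] at this
    linarith
  have hsum_f : ∑ p ∈ (univ : Finset (Fin B)).offDiag, f p
      = aa * (m1 * (B : ℝ) * B / 2 - B * m1) + bb * (m2 * (B : ℝ) * B / 3 - B * m2) := by
    rw [hf, Finset.sum_add_distrib, ← Finset.mul_sum, ← Finset.mul_sum, hFoff, hVoff]
  have harg : (∑ p ∈ (univ : Finset (Fin B)).offDiag, f p)
      / (((univ : Finset (Fin B)).offDiag.card : ℕ) : ℝ) = phi1 B m1 m2 0 := by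
    have hD : (B:ℝ) * B - B ≠ 0 := by
      have h : (B:ℝ) * B - B = (B:ℝ) * ((B:ℝ) - 1) := by ring
      rw [h]; exact mul_ne_zero hBne hB1
    rw [hsum_f, hcard, phi1]
    push_cast
    rw [div_eq_iff hD]
    field_simp
    ring
  have hj := jensen_exp ((univ : Finset (Fin B)).offDiag) f
  rw [harg, hcard] at hj
  have hoff : (5/4 : ℝ) ^ m1 * (23/18 : ℝ) ^ m2 * ((B : ℝ) * ((B : ℝ) - 1)) *
      Real.exp (phi1 B m1 m2 0)
      ≤ ∑ p ∈ (univ : Finset (Fin B)).offDiag, Pfun m1 m2 (y p.1) (y p.2) := by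
    have hPe : ∀ p ∈ (univ : Finset (Fin B)).offDiag,
        Pfun m1 m2 (y p.1) (y p.2)
        = (5/4 : ℝ) ^ m1 * (23/18 : ℝ) ^ m2 * Real.exp (f p) := fun p _ =>
      Pexp m1 m2 _ _ (hy p.1) (hy p.2)
    rw [Finset.sum_congr rfl hPe, ← Finset.mul_sum]
    have hC : (0:ℝ) ≤ (5/4 : ℝ) ^ m1 * (23/18 : ℝ) ^ m2 := by positivity
    calc (5/4 : ℝ) ^ m1 * (23/18 : ℝ) ^ m2 * ((B : ℝ) * ((B : ℝ) - 1)) *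
          Real.exp (phi1 B m1 m2 0)
        = (5/4 : ℝ) ^ m1 * (23/18 : ℝ) ^ m2 *
            (((B : ℝ) * B - B) * Real.exp (phi1 B m1 m2 0)) := by ring
      _ ≤ _ := mul_le_mul_of_nonneg_left hj hC
  rw [hsplit, hdiag]
  linarith


theorem paper_stmt_13 (l m1 m2 : ℕ) (hl : 2 ≤ l) (hm : 1 ≤ m1 + m2) (ns : ℕ → ℕ)
    (hnl : 2 ≤ ns (l - 1))
    (d : (j : ℕ) → Fin (ns j) → Fin (m1 + m2) → ℕ)
    (hU : ∀ j < l, IsUType (ns j) m1 m2 (d j)) :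
    WD (fun k : Fin (m1 + m2) => qfun m1 m2 0 (k : ℕ)) (stack (m1 + m2) ns d l) ≥
      -(((ns (l - 1) : ℝ) ^ 2 +
            2 * ((∑ j ∈ Finset.range (l - 1), ns j : ℕ) : ℝ) * (ns (l - 1) : ℝ)) /
          (((∑ j ∈ Finset.range (l - 1), ns j : ℕ) : ℝ) + (ns (l - 1) : ℝ)) ^ 2) *
        ((4 : ℝ) / 3) ^ (m1 + m2)
      + ((ns (l - 1) : ℝ) /
            (((∑ j ∈ Finset.range (l - 1), ns j : ℕ) : ℝ) + (ns (l - 1) : ℝ)) ^ 2) *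
          ((3 : ℝ) / 2) ^ (m1 + m2)
      + (((∑ j ∈ Finset.range (l - 1), ns j : ℕ) : ℝ) ^ 2 /
            (((∑ j ∈ Finset.range (l - 1), ns j : ℕ) : ℝ) + (ns (l - 1) : ℝ)) ^ 2) *
          WD (fun k : Fin (m1 + m2) => qfun m1 m2 0 (k : ℕ)) (stack (m1 + m2) ns d (l - 1))
      + (1 / (((∑ j ∈ Finset.range (l - 1), ns j : ℕ) : ℝ) + (ns (l - 1) : ℝ)) ^ 2) *
          ((5 : ℝ) / 4) ^ m1 * ((23 : ℝ) / 18) ^ m2 *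
          (T1c (ns (l - 1)) m1 m2 0 +
            2 * T2c (∑ j ∈ Finset.range (l - 1), ns j) (ns (l - 1)) m1 m2) := by
  obtain ⟨L, rfl⟩ : ∃ L, l = L + 1 := ⟨l - 1, by omega⟩
  simp only [Nat.add_sub_cancel] at hnl ⊢
  have hUL := hU L (Nat.lt_succ_self L)
  have hbal2 : ∀ k : Fin (m1 + m2), (k : ℕ) < m1 →
      ∀ v < 2, 2 * (univ.filter fun j => d L j k = v).card = ns L := by
    intro k hk; have h := hUL k; rw [if_pos hk] at h; exact h.2
  have hbal3 : ∀ k : Fin (m1 + m2), ¬ (k : ℕ) < m1 →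
      ∀ v < 3, 3 * (univ.filter fun j => d L j k = v).card = ns L := by
    intro k hk; have h := hUL k; rw [if_neg hk] at h; exact h.2
  have hvd : ∀ (i : Fin (ns L)) (k : Fin (m1 + m2)),
      d L i k < if (k : ℕ) < m1 then 2 else 3 := by
    intro i k; have h := hUL k; by_cases hk : (k : ℕ) < m1
    · rw [if_pos hk] at h ⊢; exact h.1 i
    · rw [if_neg hk] at h ⊢; exact h.1 i
  have hvold : ∀ (i : Fin (∑ j ∈ Finset.range L, ns j)) (k : Fin (m1 + m2)),
      stack (m1 + m2) ns d L i k < if (k : ℕ) < m1 then 2 else 3 :=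
    fun i k => stack_lt m1 m2 ns d L (fun j hj => hU j (Nat.lt_succ_of_lt hj)) i k
  have hWD : ∀ {NN : ℕ} (x : Fin NN → Fin (m1 + m2) → ℕ),
      WD (fun k : Fin (m1 + m2) => qfun m1 m2 0 (k : ℕ)) x
      = -((4 : ℝ) / 3) ^ (m1 + m2) + (1 / (NN : ℝ) ^ 2) *
          ∑ i, ∑ j, Pfun m1 m2 (x i) (x j) := fun x => rfl
  set W0 := WD (fun k : Fin (m1 + m2) => qfun m1 m2 0 (k : ℕ)) (stack (m1 + m2) ns d L) with hW0
  rw [ge_iff_le, hWD (stack (m1 + m2) ns d (L + 1))]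
  -- split the big double sum
  have hsplit : (∑ i : Fin (∑ j ∈ Finset.range (L + 1), ns j),
        ∑ j : Fin (∑ j ∈ Finset.range (L + 1), ns j),
          Pfun m1 m2 (stack (m1 + m2) ns d (L + 1) i) (stack (m1 + m2) ns d (L + 1) j))
      = (∑ i : Fin (∑ j ∈ Finset.range L, ns j), ∑ j : Fin (∑ j ∈ Finset.range L, ns j),
            Pfun m1 m2 (stack (m1 + m2) ns d L i) (stack (m1 + m2) ns d L j))
        + ((∑ i : Fin (∑ j ∈ Finset.range L, ns j), ∑ j : Fin (ns L),
              Pfun m1 m2 (stack (m1 + m2) ns d L i) (d L j))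
          + ((∑ i : Fin (ns L), ∑ j : Fin (∑ j ∈ Finset.range L, ns j),
                Pfun m1 m2 (d L i) (stack (m1 + m2) ns d L j))
            + ∑ i : Fin (ns L), ∑ j : Fin (ns L), Pfun m1 m2 (d L i) (d L j))) := by
    rw [← Equiv.sum_comp (EE ns L) (fun i => ∑ j : Fin (∑ j ∈ Finset.range (L + 1), ns j),
      Pfun m1 m2 (stack (m1 + m2) ns d (L + 1) i) (stack (m1 + m2) ns d (L + 1) j))]
    have hinner : ∀ x : Fin (∑ j ∈ Finset.range L, ns j) ⊕ Fin (ns L),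
        (∑ j : Fin (∑ j ∈ Finset.range (L + 1), ns j),
          Pfun m1 m2 (stack (m1 + m2) ns d (L + 1) (EE ns L x)) (stack (m1 + m2) ns d (L + 1) j))
        = ∑ y : Fin (∑ j ∈ Finset.range L, ns j) ⊕ Fin (ns L),
            Pfun m1 m2 (rowE (m1 + m2) ns d L x) (rowE (m1 + m2) ns d L y) := by
      intro x
      rw [← Equiv.sum_comp (EE ns L) (fun j =>
        Pfun m1 m2 (stack (m1 + m2) ns d (L + 1) (EE ns L x)) (stack (m1 + m2) ns d (L + 1) j))]
      exact Finset.sum_congr rfl fun y _ => by rw [stack_EE, stack_EE]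
    rw [Finset.sum_congr rfl fun x _ => hinner x]
    simp only [Fintype.sum_sum_type, rowE]
    rw [Finset.sum_add_distrib, Finset.sum_add_distrib]
    ring
  rw [hsplit]
  have hA : (∑ i : Fin (∑ j ∈ Finset.range L, ns j), ∑ j : Fin (∑ j ∈ Finset.range L, ns j),
        Pfun m1 m2 (stack (m1 + m2) ns d L i) (stack (m1 + m2) ns d L j))
      = ((∑ j ∈ Finset.range L, ns j : ℕ) : ℝ) ^ 2 * (W0 + ((4:ℝ)/3) ^ (m1 + m2)) := by
    rcases Nat.eq_zero_or_pos (∑ j ∈ Finset.range L, ns j) with hN0 | hNpos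
    · have hz : (∑ i : Fin (∑ j ∈ Finset.range L, ns j), ∑ j : Fin (∑ j ∈ Finset.range L, ns j),
          Pfun m1 m2 (stack (m1 + m2) ns d L i) (stack (m1 + m2) ns d L j)) = 0 :=
        Finset.sum_eq_zero fun i _ => absurd i.isLt (by omega)
      rw [hz, show ((∑ j ∈ Finset.range L, ns j : ℕ) : ℝ) = 0 from by exact_mod_cast hN0]
      ring
    · have hne : ((∑ j ∈ Finset.range L, ns j : ℕ) : ℝ) ≠ 0 := Nat.cast_ne_zero.2 (by omega)
      rw [hW0, hWD]
      have hsimp : -((4:ℝ)/3) ^ (m1 + m2) + 1 / ((∑ j ∈ Finset.range L, ns j : ℕ) : ℝ) ^ 2 *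
            (∑ i : Fin (∑ j ∈ Finset.range L, ns j), ∑ j : Fin (∑ j ∈ Finset.range L, ns j),
              Pfun m1 m2 (stack (m1 + m2) ns d L i) (stack (m1 + m2) ns d L j))
            + ((4:ℝ)/3) ^ (m1 + m2)
          = (((∑ j ∈ Finset.range L, ns j : ℕ) : ℝ) ^ 2)⁻¹ *
            (∑ i : Fin (∑ j ∈ Finset.range L, ns j), ∑ j : Fin (∑ j ∈ Finset.range L, ns j),
              Pfun m1 m2 (stack (m1 + m2) ns d L i) (stack (m1 + m2) ns d L j)) := by
        rw [one_div]; ring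
      rw [hsimp, ← mul_assoc, mul_inv_cancel₀ (pow_ne_zero 2 hne), one_mul]
  have hC : (∑ i : Fin (ns L), ∑ j : Fin (∑ j ∈ Finset.range L, ns j),
        Pfun m1 m2 (d L i) (stack (m1 + m2) ns d L j))
      = ∑ i : Fin (∑ j ∈ Finset.range L, ns j), ∑ j : Fin (ns L),
          Pfun m1 m2 (stack (m1 + m2) ns d L i) (d L j) := by
    rw [Finset.sum_comm]
    exact Finset.sum_congr rfl fun i _ => Finset.sum_congr rfl fun j _ => Psymm m1 m2 _ _
  have hB := bound_cross m1 m2 (stack (m1 + m2) ns d L) (d L) hvold hvd hbal2 hbal3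
  have hDD := bound_within m1 m2 hnl (d L) hvd hbal2 hbal3
  have hT : ((∑ j ∈ Finset.range (L + 1), ns j : ℕ) : ℝ)
      = ((∑ j ∈ Finset.range L, ns j : ℕ) : ℝ) + (ns L : ℝ) := by
    rw [Finset.sum_range_succ]; push_cast; ring
  rw [hT, hA, hC]
  set NR := ((∑ j ∈ Finset.range L, ns j : ℕ) : ℝ) with hNR
  set nR := ((ns L : ℕ) : ℝ) with hnR
  have hn2 : (2:ℝ) ≤ nR := by rw [hnR]; exact_mod_cast hnl
  have hNR0 : (0:ℝ) ≤ NR := by rw [hNR]; positivity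
  have hTpos : (0:ℝ) < NR + nR := by linarith
  rw [show WD (fun k : Fin (m1 + m2) => qfun m1 m2 0 (k : ℕ)) (stack (m1 + m2) ns d (L + 1 - 1))
    = W0 from rfl]
  refine le_trans (b := -((4:ℝ)/3) ^ (m1 + m2) + 1 / (NR + nR) ^ 2 *
      (NR ^ 2 * (W0 + ((4:ℝ)/3) ^ (m1 + m2))
        + ((5/4:ℝ) ^ m1 * (23/18:ℝ) ^ m2 * (NR * nR) * Real.exp (phi2 m1 m2)
          + ((5/4:ℝ) ^ m1 * (23/18:ℝ) ^ m2 * (NR * nR) * Real.exp (phi2 m1 m2)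
            + (nR * ((3:ℝ)/2) ^ (m1 + m2)
              + (5/4:ℝ) ^ m1 * (23/18:ℝ) ^ m2 * (nR * (nR - 1)) *
                  Real.exp (phi1 (ns L) m1 m2 0)))))) (le_of_eq ?_) ?_
  · rw [T1c, T2c]
    rw [hnR, hNR]
    field_simp
    ring
  · refine add_le_add le_rfl (mul_le_mul_of_nonneg_left ?_ (by positivity))
    refine add_le_add le_rfl ?_
    exact add_le_add hB (add_le_add hB hDD)


end CAUD

end
end
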